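/- arXiv:cs/0701079 — 3 statements merged into one kernel-verified Lean document; each statement's English description precedes it below -/
import Mathlib

section
/- There exists a constant C > 0 such that for all integers n ≥ 2 and all weights k with 0 < k < n: | −ln P_KT(w) − [ n·F(w) + (1/2)·ln n + (1/2)·ln(π/2) + 1/(12n) + 1/(24k) + 1/(24(n−k)) ] | ≤ C·( 1/k³ + 1/(n−k)³ ), where w is any binary word of length n and weight k. -/
open Finset Real

noncomputable section

/-- Weight (number of 1-bits) of a binary word. -/
def bwt {n : ℕ} (w : Fin n → Bool) : ℕ := (Finset.univ.filter fun i => w i = true).card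

/-- KT-estimated probability of a word of length `n` and weight `k`. -/
def PKT (n k : ℕ) : ℝ :=
  Real.Gamma ((k : ℝ) + 1/2) * Real.Gamma ((n : ℝ) - (k : ℝ) + 1/2) /
    (Real.pi * Real.Gamma ((n : ℝ) + 1))

/-- KT-estimated probability of a binary word. -/
def PKTw {n : ℕ} (w : Fin n → Bool) : ℝ := PKT n (bwt w)

/-- Empirical entropy of a binary word (the convention `0 * log 0 = 0` holds
automatically since `Real.log 0 = 0`). -/
def Femp {n : ℕ} (w : Fin n → Bool) : ℝ :=
  -((bwt w : ℝ) / n) * Real.log ((bwt w : ℝ) / n)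
    - (((n : ℝ) - bwt w) / n) * Real.log (((n : ℝ) - bwt w) / n)

/-- Stirling remainder. -/
def rS (j : ℕ) : ℝ :=
  Real.log (Nat.factorial j) - (((j : ℝ) + 1/2) * Real.log j - j + (1/2) * Real.log (2*π) + 1/(12*j))

lemma rS_succ_sub (j : ℕ) (hj : 1 ≤ j) :
    rS j - rS (j+1) = ((j:ℝ) + 1/2) * Real.log (1 + 1/(j:ℝ)) - 1
      - (1/(12*(j:ℝ)) - 1/(12*((j:ℝ)+1))) := by
  have hj0 : (0:ℝ) < (j:ℝ) := by exact_mod_cast hj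
  have hfac : Real.log (Nat.factorial (j+1)) = Real.log ((j:ℝ)+1) + Real.log (Nat.factorial j) := by
    rw [Nat.factorial_succ]
    push_cast
    rw [Real.log_mul (by positivity) (by positivity)]
  have hlog : Real.log (1 + 1/(j:ℝ)) = Real.log ((j:ℝ)+1) - Real.log j := by
    rw [← Real.log_div (by positivity) (ne_of_gt hj0)]
    congr 1
    field_simp
  simp only [rS, hfac, hlog]
  push_cast
  ring


lemma log_P4_bound {x : ℝ} (hx : 2 ≤ x) :
    |Real.log (1+1/x) - (1/x - 1/(2*x^2) + 1/(3*x^3) - 1/(4*x^4))| ≤ 2/x^5 := by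
  have hx0 : (0:ℝ) < x := by linarith
  have h1 : |(-(1/x))| < 1 := by
    rw [abs_neg, abs_of_pos (by positivity)]
    rw [div_lt_one hx0]; linarith
  have h := Real.abs_log_sub_add_sum_range_le h1 4
  simp only [Finset.sum_range_succ, Finset.sum_range_zero] at h
  have hxabs : |(-(1/x))| = 1/x := by rw [abs_neg, abs_of_pos (by positivity)]
  rw [hxabs] at h
  have heq : (0:ℝ) + (-(1/x))^(0+1)/(0+1) + (-(1/x))^(1+1)/(1+1) + (-(1/x))^(2+1)/(2+1)
      + (-(1/x))^(3+1)/(3+1) + Real.log (1 - -(1/x))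
      = Real.log (1+1/x) - (1/x - 1/(2*x^2) + 1/(3*x^3) - 1/(4*x^4)) := by
    have h3 : (1:ℝ) - -(1/x) = 1 + 1/x := by ring
    rw [h3]
    push_cast
    field_simp
    ring
  rw [show ((0:ℕ):ℝ) + 1 = (0:ℝ) + 1 by norm_num, show ((1:ℕ):ℝ) + 1 = (1:ℝ) + 1 by norm_num,
    show ((2:ℕ):ℝ) + 1 = (2:ℝ) + 1 by norm_num, show ((3:ℕ):ℝ) + 1 = (3:ℝ) + 1 by norm_num] at h
  rw [heq] at h
  refine h.trans ?_
  have hxinv : 1/x ≤ 1/2 := by rw [div_le_div_iff₀ hx0 (by norm_num)]; linarith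
  rw [div_le_div_iff₀ (by linarith) (by positivity)]
  have hx5 : (1/x)^(4+1) * x^5 = 1 := by
    rw [show (4+1:ℕ) = 5 from rfl, ← mul_pow, one_div_mul_cancel hx0.ne', one_pow]
  rw [hx5]
  linarith

lemma rS_diff_bound (j : ℕ) (hj : 1 ≤ j) :
    |rS j - rS (j+1)| ≤ 8 * (1/(j:ℝ)^3 - 1/((j:ℝ)+1)^3) := by
  rw [rS_succ_sub j hj]
  rcases eq_or_lt_of_le hj with h1 | h2
  · -- j = 1
    subst h1
    norm_num
    rw [abs_le]
    constructor <;> nlinarith [Real.log_two_lt_d9, Real.log_two_gt_d9]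
  · -- j ≥ 2
    have hj2 : (2:ℝ) ≤ (j:ℝ) := by exact_mod_cast h2
    set x : ℝ := (j:ℝ) with hxdef
    have hx0 : (0:ℝ) < x := by linarith
    have hE := log_P4_bound hj2
    set E : ℝ := Real.log (1+1/x) - (1/x - 1/(2*x^2) + 1/(3*x^3) - 1/(4*x^4)) with hEdef
    have hsplit : (x + 1/2) * Real.log (1 + 1/x) - 1 - (1/(12*x) - 1/(12*(x+1)))
        = -(1/(12*x^3*(x+1)) + 1/(8*x^4)) + (x+1/2)*E := by
      rw [hEdef]
      field_simp
      ring
    rw [hsplit]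
    have habs : |(-(1/(12*x^3*(x+1)) + 1/(8*x^4)) + (x+1/2)*E)|
        ≤ (1/(12*x^3*(x+1)) + 1/(8*x^4)) + (x+1/2)*(2/x^5) := by
      refine (abs_add_le _ _).trans ?_
      gcongr
      · rw [abs_neg, abs_of_pos (by positivity)]
      · rw [abs_mul, abs_of_pos (by positivity)]
        gcongr
    refine habs.trans ?_
    have e1 : 1/(12*x^3*(x+1)) + 1/(8*x^4) + (x+1/2)*(2/x^5)
        = (53*x^2+75*x+24)/(24*x^5*(x+1)) := by
      field_simp
      ring
    have hmid : (53*x^2+75*x+24)/(24*x^5*(x+1)) ≤ 3/x^4 := by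
      rw [div_le_div_iff₀ (by positivity) (by positivity)]
      nlinarith [pow_pos hx0 4, pow_pos hx0 5, pow_pos hx0 6]
    have hfin : 3/x^4 ≤ 8 * (1/x^3 - 1/(x+1)^3) := by
      have e2 : 8 * (1/x^3 - 1/(x+1)^3) = (8*(3*x^2+3*x+1))/(x^3*(x+1)^3) := by
        field_simp
        ring
      rw [e2, div_le_div_iff₀ (by positivity) (by positivity)]
      nlinarith [pow_pos hx0 3, pow_pos hx0 4, pow_pos hx0 5, pow_pos hx0 6, sq_nonneg x]
    rw [e1]
    exact hmid.trans hfin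

lemma rS_tele (j : ℕ) (hj : 1 ≤ j) : ∀ N, j ≤ N → |rS j - rS N| ≤ 8 * (1/(j:ℝ)^3 - 1/(N:ℝ)^3) := by
  intro N
  induction N with
  | zero => intro h; omega
  | succ N ih =>
    intro hN
    rcases Nat.lt_or_ge j (N+1) with h | h
    · have hjN : j ≤ N := by omega
      have h1 := ih hjN
      have h2 := rS_diff_bound N (le_trans hj hjN)
      calc |rS j - rS (N+1)| ≤ |rS j - rS N| + |rS N - rS (N+1)| := by
            have : rS j - rS (N+1) = (rS j - rS N) + (rS N - rS (N+1)) := by ring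
            rw [this]; exact abs_add_le _ _
        _ ≤ 8 * (1/(j:ℝ)^3 - 1/(N:ℝ)^3) + 8 * (1/(N:ℝ)^3 - 1/((N:ℝ)+1)^3) := add_le_add h1 h2
        _ = 8 * (1/(j:ℝ)^3 - 1/((N:ℝ)+1)^3) := by ring
        _ = 8 * (1/(j:ℝ)^3 - 1/((N+1:ℕ):ℝ)^3) := by push_cast; ring
    · have : j = N+1 := by omega
      subst this
      simp

lemma rS_tendsto : Filter.Tendsto rS Filter.atTop (nhds 0) := by
  have h1 : Filter.Tendsto (fun n : ℕ => Real.log (Stirling.stirlingSeq n) - Real.log (Real.sqrt π)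
      - 1/(12*(n:ℝ))) Filter.atTop (nhds 0) := by
    have ha : Filter.Tendsto (fun n : ℕ => Real.log (Stirling.stirlingSeq n)) Filter.atTop
        (nhds (Real.log (Real.sqrt π))) :=
      (Real.continuousAt_log (by positivity)).tendsto.comp Stirling.tendsto_stirlingSeq_sqrt_pi
    have hb : Filter.Tendsto (fun n : ℕ => 1/(12*(n:ℝ))) Filter.atTop (nhds 0) := by
      have : Filter.Tendsto (fun n : ℕ => 12*(n:ℝ)) Filter.atTop Filter.atTop :=
        Filter.Tendsto.const_mul_atTop (by norm_num) tendsto_natCast_atTop_atTop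
      simpa using this.const_div_atTop 1
    simpa using (ha.sub_const (Real.log (Real.sqrt π))).sub hb
  refine h1.congr' ?_
  filter_upwards [Filter.eventually_ge_atTop 1] with n hn
  have hn0 : (0:ℝ) < (n:ℝ) := by exact_mod_cast hn
  have hform := Stirling.log_stirlingSeq_formula n
  rw [rS, hform]
  rw [Real.log_div (ne_of_gt hn0) (by positivity), Real.log_exp,
    Real.log_mul (by norm_num) (ne_of_gt hn0), Real.log_mul (by norm_num) (by positivity),
    Real.log_sqrt Real.pi_pos.le]
  ring

lemma rS_bound (j : ℕ) (hj : 1 ≤ j) : |rS j| ≤ 8 / (j:ℝ)^3 := by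
  have hlim : Filter.Tendsto (fun N : ℕ => |rS j - rS N|) Filter.atTop (nhds (|rS j|)) := by
    have := (rS_tendsto.const_sub (rS j)).abs
    simpa using this
  have hle : ∀ᶠ N in Filter.atTop, |rS j - rS N| ≤ 8 / (j:ℝ)^3 := by
    filter_upwards [Filter.eventually_ge_atTop j] with N hN
    refine (rS_tele j hj N hN).trans ?_
    have hN0 : (0:ℝ) ≤ 1/(N:ℝ)^3 := by positivity
    rw [mul_sub]
    have : 8 * (1/(j:ℝ)^3) = 8 / (j:ℝ)^3 := by ring
    linarith
  exact le_of_tendsto hlim hle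

lemma Gamma_nat_half (k : ℕ) :
    Real.Gamma ((k:ℝ) + 1/2) = Real.sqrt π * (Nat.factorial (2*k)) / (4^k * Nat.factorial k) := by
  induction k with
  | zero =>
    rw [show ((0:ℕ):ℝ) + 1/2 = 1/2 by norm_num, Real.Gamma_one_half_eq]
    simp
  | succ k ih =>
    have h1 : ((k+1:ℕ):ℝ) + 1/2 = ((k:ℝ) + 1/2) + 1 := by push_cast; ring
    rw [h1, Real.Gamma_add_one (by positivity), ih]
    have h2 : (2*(k+1)) = (2*k+1) + 1 := by ring
    rw [h2, Nat.factorial_succ (2*k+1), Nat.factorial_succ (2*k), Nat.factorial_succ k]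
    have hf : (0:ℝ) < Nat.factorial k := by exact_mod_cast Nat.factorial_pos k
    have hf2 : (0:ℝ) < Nat.factorial (2*k) := by exact_mod_cast Nat.factorial_pos (2*k)
    push_cast
    field_simp
    ring

lemma PKT_eq (k m : ℕ) :
    PKT (k+m) k = ((Nat.factorial (2*k) : ℝ) * Nat.factorial (2*m)) /
      (4^(k+m) * Nat.factorial k * Nat.factorial m * Nat.factorial (k+m)) := by
  have hc : ((k+m:ℕ):ℝ) - (k:ℝ) + 1/2 = (m:ℝ) + 1/2 := by push_cast; ring
  rw [PKT, hc, Gamma_nat_half, Gamma_nat_half, Real.Gamma_nat_eq_factorial]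
  obtain ⟨s, hs⟩ : ∃ s, Real.sqrt π = s := ⟨_, rfl⟩
  have hs0 : 0 < s := hs ▸ Real.sqrt_pos.mpr Real.pi_pos
  rw [hs, show π = s*s by rw [← hs]; exact (Real.mul_self_sqrt Real.pi_pos.le).symm]
  have hf : ∀ j : ℕ, (0:ℝ) < Nat.factorial j := fun j => by exact_mod_cast Nat.factorial_pos j
  rw [pow_add]
  field_simp

lemma neg_log_PKT (k m : ℕ) :
    -Real.log (PKT (k+m) k) = Real.log (Nat.factorial (k+m)) - Real.log (Nat.factorial (2*k))
      - Real.log (Nat.factorial (2*m)) + Real.log (Nat.factorial k) + Real.log (Nat.factorial m)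
      + 2*((k:ℝ)+(m:ℝ))*Real.log 2 := by
  have hf : ∀ j : ℕ, (0:ℝ) < Nat.factorial j := fun j => by exact_mod_cast Nat.factorial_pos j
  rw [PKT_eq, Real.log_div (by positivity) (by positivity),
    Real.log_mul (by positivity) (by positivity),
    Real.log_mul (by positivity) (by positivity),
    Real.log_mul (by positivity) (by positivity),
    Real.log_mul (by positivity) (by positivity),
    Real.log_pow]
  rw [show (4:ℝ) = 2^2 by norm_num, Real.log_pow]
  push_cast
  ring

set_option maxHeartbeats 1000000 in
/-- Stirling-type expansion of `−ln P_KT(w)` around the empirical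
entropy, uniform in `n ≥ 2` and `0 < k < n`. -/
theorem stmt_4 :
    ∃ C : ℝ, 0 < C ∧ ∀ n : ℕ, 2 ≤ n → ∀ w : Fin n → Bool, 0 < bwt w → bwt w < n →
      |(-Real.log (PKTw w)) -
          ((n : ℝ) * Femp w + (1 / 2) * Real.log n + (1 / 2) * Real.log (Real.pi / 2) +
            1 / (12 * (n : ℝ)) + 1 / (24 * (bwt w : ℝ)) +
            1 / (24 * ((n : ℝ) - (bwt w : ℝ))))| ≤
        C * (1 / (bwt w : ℝ) ^ 3 + 1 / ((n : ℝ) - (bwt w : ℝ)) ^ 3) := by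
  refine ⟨17, by norm_num, ?_⟩
  intro n hn w hk hkn
  set k := bwt w with hkdef
  set m := n - k with hmdef
  have hm : 0 < m := by omega
  have hnkm : n = k + m := by omega
  have hK : (0:ℝ) < (k:ℝ) := by exact_mod_cast hk
  have hM : (0:ℝ) < (m:ℝ) := by exact_mod_cast hm
  have hnKM : (n:ℝ) = (k:ℝ) + (m:ℝ) := by rw [hnkm]; push_cast; ring
  have hnK : (n:ℝ) - (k:ℝ) = (m:ℝ) := by rw [hnKM]; ring
  have hS : ∀ j : ℕ, Real.log (Nat.factorial j)
      = (((j:ℝ)+1/2)*Real.log j - j + (1/2)*Real.log (2*π) + 1/(12*(j:ℝ))) + rS j := by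
    intro j; rw [rS]; ring
  have e1 : -Real.log (PKTw w) = Real.log (Nat.factorial (k+m)) - Real.log (Nat.factorial (2*k))
      - Real.log (Nat.factorial (2*m)) + Real.log (Nat.factorial k) + Real.log (Nat.factorial m)
      + 2*((k:ℝ)+(m:ℝ))*Real.log 2 := by
    rw [PKTw, ← hkdef, hnkm]
    exact neg_log_PKT k m
  have e2 := hS (k+m)
  have e3 := hS (2*k)
  have e4 := hS (2*m)
  have e5 := hS k
  have e6 := hS m
  push_cast at e2 e3 e4 e5 e6
  rw [Real.log_mul (by norm_num) (ne_of_gt hK)] at e3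
  rw [Real.log_mul (by norm_num) (ne_of_gt hM)] at e4
  have hlog2pi : Real.log (2*π) = Real.log 2 + Real.log π :=
    Real.log_mul (by norm_num) Real.pi_ne_zero
  have hlogpi2 : Real.log (π/2) = Real.log π - Real.log 2 :=
    Real.log_div Real.pi_ne_zero (by norm_num)
  have eF : (n:ℝ) * Femp w = ((k:ℝ)+(m:ℝ))*Real.log ((k:ℝ)+(m:ℝ))
      - (k:ℝ)*Real.log (k:ℝ) - (m:ℝ)*Real.log (m:ℝ) := by
    rw [Femp, ← hkdef, hnK, hnKM,
      Real.log_div (ne_of_gt hK) (by positivity),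
      Real.log_div (ne_of_gt hM) (by positivity)]
    field_simp
    ring
  have key : (-Real.log (PKTw w)) -
      ((n : ℝ) * Femp w + (1 / 2) * Real.log n + (1 / 2) * Real.log (Real.pi / 2) +
        1 / (12 * (n : ℝ)) + 1 / (24 * (k : ℝ)) + 1 / (24 * ((n : ℝ) - (k : ℝ))))
      = rS (k+m) + rS k + rS m - rS (2*k) - rS (2*m) := by
    rw [e1, eF, hnK, hlogpi2, e2, e3, e4, e5, e6, hlog2pi, hnKM]
    ring
  rw [key, hnK]
  have b1 := rS_bound (k+m) (by omega)
  have b2 := rS_bound k (by omega)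
  have b3 := rS_bound m (by omega)
  have b4 := rS_bound (2*k) (by omega)
  have b5 := rS_bound (2*m) (by omega)
  push_cast at b1 b4 b5
  have habs : |rS (k+m) + rS k + rS m - rS (2*k) - rS (2*m)|
      ≤ |rS (k+m)| + |rS k| + |rS m| + |rS (2*k)| + |rS (2*m)| := by
    calc |rS (k+m) + rS k + rS m - rS (2*k) - rS (2*m)|
        ≤ |rS (k+m) + rS k + rS m - rS (2*k)| + |rS (2*m)| := abs_sub _ _
      _ ≤ |rS (k+m) + rS k + rS m| + |rS (2*k)| + |rS (2*m)| := by
          have := abs_sub (rS (k+m) + rS k + rS m) (rS (2*k)); linarith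
      _ ≤ |rS (k+m)| + |rS k| + |rS m| + |rS (2*k)| + |rS (2*m)| := by
          have h1 := abs_add_le (rS (k+m) + rS k) (rS m)
          have h2 := abs_add_le (rS (k+m)) (rS k)
          linarith
  refine habs.trans ?_
  have c1 : 8/((k:ℝ)+(m:ℝ))^3 ≤ 8/(k:ℝ)^3 := by
    apply div_le_div_of_nonneg_left (by norm_num : (0:ℝ) ≤ 8) (by positivity)
    exact pow_le_pow_left₀ hK.le (by linarith) 3
  have c4 : 8/(2*(k:ℝ))^3 = 1/(k:ℝ)^3 := by field_simp; ring
  have c5 : 8/(2*(m:ℝ))^3 = 1/(m:ℝ)^3 := by field_simp; ring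
  rw [c4] at b4
  rw [c5] at b5
  have hb : (0:ℝ) ≤ 1/(m:ℝ)^3 := by positivity
  have b1' := b1.trans c1
  have d1 : |rS (k+m)| ≤ 8 * (1/(k:ℝ)^3) := by rw [mul_one_div]; exact b1'
  have d2 : |rS k| ≤ 8 * (1/(k:ℝ)^3) := by rw [mul_one_div]; exact b2
  have d3 : |rS m| ≤ 8 * (1/(m:ℝ)^3) := by rw [mul_one_div]; exact b3
  linarith [d1, d2, d3, b4, b5, hb]

end
end

section
/- For every integer n ≥ 1 and p ∈ (0,1) with q = 1−p, the average empirical entropy satisfies the exact identity Σ_{|w|=n} Pr(w)·F(w) = ln n − p·f(n−1, p) − q·f(n−1, q). -/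
open Finset Real

noncomputable section

/-- Probability of a binary word under a memoryless source with parameter `p`. -/
def prW (p : ℝ) {n : ℕ} (w : Fin n → Bool) : ℝ := p ^ bwt w * (1 - p) ^ (n - bwt w)

/-- The binomial sum `f(m, θ) = Σ_{k=0}^{m} C(m,k) θ^k (1−θ)^{m−k} ln(1+k)`. -/
def fBer (m : ℕ) (θ : ℝ) : ℝ :=
  ∑ k ∈ Finset.range (m + 1),
    (m.choose k : ℝ) * θ ^ k * (1 - θ) ^ (m - k) * Real.log (1 + (k : ℝ))

lemma sum_bwt {n : ℕ} (G : ℕ → ℝ) :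
    ∑ w : Fin n → Bool, G (bwt w) =
      ∑ k ∈ Finset.range (n+1), (n.choose k : ℝ) * G k := by
  have h1 : ∑ s : Finset (Fin n), G s.card = ∑ w : Fin n → Bool, G (bwt w) := by
    apply Fintype.sum_bijective (fun s : Finset (Fin n) => fun i => decide (i ∈ s))
    · constructor
      · intro s t h
        ext i
        simpa using congrFun h i
      · intro w
        exact ⟨Finset.univ.filter (fun i => w i = true), by ext i; simp⟩
    · intro s
      unfold bwt
      congr 2
      ext i
      simp
  rw [← h1]
  rw [← Finset.sum_fiberwise_of_maps_to'
      (fun (s : Finset (Fin n)) (_ : s ∈ Finset.univ) => Finset.mem_range.mpr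
        (Nat.lt_succ_of_le (by simpa using Finset.card_le_univ s))) G]
  refine Finset.sum_congr rfl fun k hk => ?_
  rw [Finset.sum_const, nsmul_eq_mul]
  congr 1
  have : Finset.univ.filter (fun s : Finset (Fin n) => s.card = k)
      = Finset.powersetCard k Finset.univ := by
    rw [Finset.powersetCard_eq_filter, Finset.powerset_univ]
  rw [this, Finset.card_powersetCard, Finset.card_univ, Fintype.card_fin]

lemma key (n : ℕ) (hn : 1 ≤ n) (θ : ℝ) :
    ∑ k ∈ Finset.range (n+1),
        (n.choose k : ℝ) * θ^k * (1-θ)^(n-k) * ((k:ℝ)/n * Real.log k)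
      = θ * fBer (n-1) θ := by
  obtain ⟨m, rfl⟩ : ∃ m, n = m + 1 := ⟨n - 1, (Nat.succ_pred_eq_of_pos hn).symm⟩
  rw [Finset.sum_range_succ']
  simp only [Nat.cast_zero, zero_div, zero_mul, mul_zero, add_zero]
  rw [fBer, Finset.mul_sum]
  simp only [Nat.add_sub_cancel, Nat.succ_sub_succ]
  refine Finset.sum_congr rfl fun j hj => ?_
  have hcast : ((m+1).choose (j+1) : ℝ) * ((j:ℝ)+1) = ((m:ℝ)+1) * (m.choose j : ℝ) := by
    have h := Nat.add_one_mul_choose_eq m j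
    have h2 : ((Nat.succ m * m.choose j : ℕ) : ℝ)
        = (((m+1).choose (j+1) * Nat.succ j : ℕ) : ℝ) := by rw [h]
    push_cast at h2
    linarith
  have hm : ((m:ℝ)+1) ≠ 0 := by positivity
  push_cast
  rw [show (j:ℝ)+1 = 1+(j:ℝ) from by ring]
  field_simp
  linear_combination (θ^(j+1) * (1-θ)^(m-j) * Real.log (1+(j:ℝ))) * hcast

/-- exact identity for the average empirical entropy:
`Σ_{|w|=n} Pr(w)·F(w) = ln n − p·f(n−1,p) − q·f(n−1,q)`. -/
theorem stmt_5 (n : ℕ) (hn : 1 ≤ n) (p : ℝ) (hp : p ∈ Set.Ioo (0 : ℝ) 1) :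
    ∑ w : Fin n → Bool, prW p w * Femp w =
      Real.log n - p * fBer (n - 1) p - (1 - p) * fBer (n - 1) (1 - p) := by
  have hn0 : (n:ℝ) ≠ 0 := Nat.cast_ne_zero.mpr (by omega)
  have h1 : ∑ w : Fin n → Bool, prW p w * Femp w
      = ∑ k ∈ Finset.range (n+1), (n.choose k : ℝ) *
          (p^k * (1-p)^(n-k) *
            (-((k:ℝ)/n) * Real.log ((k:ℝ)/n)
              - (((n:ℝ)-k)/n) * Real.log (((n:ℝ)-k)/n))) := by
    rw [← sum_bwt (fun k => p^k * (1-p)^(n-k) *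
            (-((k:ℝ)/n) * Real.log ((k:ℝ)/n)
              - (((n:ℝ)-k)/n) * Real.log (((n:ℝ)-k)/n)))]
    exact Finset.sum_congr rfl fun w _ => rfl
  rw [h1]
  have h2 : ∀ k ∈ Finset.range (n+1),
      (n.choose k : ℝ) *
          (p^k * (1-p)^(n-k) *
            (-((k:ℝ)/n) * Real.log ((k:ℝ)/n)
              - (((n:ℝ)-k)/n) * Real.log (((n:ℝ)-k)/n)))
      = (n.choose k : ℝ) * p^k * (1-p)^(n-k) * Real.log n
        - (n.choose k : ℝ) * p^k * (1-p)^(n-k) * ((k:ℝ)/n * Real.log k)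
        - (n.choose k : ℝ) * p^k * (1-p)^(n-k)
            * (((n-k:ℕ):ℝ)/n * Real.log ((n-k:ℕ):ℝ)) := by
    intro k hk
    have hkn : k ≤ n := by
      have := Finset.mem_range.mp hk; omega
    have hc : ((n-k:ℕ):ℝ) = (n:ℝ) - k := by
      push_cast [Nat.cast_sub hkn]; ring
    have e1 : -((k:ℝ)/n) * Real.log ((k:ℝ)/n)
        = (k:ℝ)/n * Real.log n - (k:ℝ)/n * Real.log k := by
      rcases Nat.eq_zero_or_pos k with h0 | h0
      · simp [h0]
      · rw [Real.log_div (by exact_mod_cast h0.ne') hn0]; ring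
    have e2 : -(((n:ℝ)-k)/n) * Real.log (((n:ℝ)-k)/n)
        = ((n:ℝ)-k)/n * Real.log n - ((n:ℝ)-k)/n * Real.log ((n:ℝ)-k) := by
      rcases Nat.lt_or_ge k n with h0 | h0
      · have hne : (n:ℝ) - k ≠ 0 := by
          rw [← hc]
          exact_mod_cast (Nat.sub_pos_of_lt h0).ne'
        rw [Real.log_div hne hn0]; ring
      · have : k = n := le_antisymm hkn h0
        simp [this]
    have hsum : (k:ℝ)/n + ((n:ℝ)-k)/n = 1 := by field_simp; ring
    rw [hc]
    have expand : -((k:ℝ)/n) * Real.log ((k:ℝ)/n)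
              - (((n:ℝ)-k)/n) * Real.log (((n:ℝ)-k)/n)
        = ((k:ℝ)/n + ((n:ℝ)-k)/n) * Real.log n
          - (k:ℝ)/n * Real.log k - ((n:ℝ)-k)/n * Real.log ((n:ℝ)-k) := by
      rw [e1] at *
      linarith [e2]
    rw [expand, hsum]
    ring
  rw [Finset.sum_congr rfl h2]
  rw [Finset.sum_sub_distrib, Finset.sum_sub_distrib]
  have hb : ∑ k ∈ Finset.range (n+1), (n.choose k:ℝ) * p^k * (1-p)^(n-k) * Real.log n
      = Real.log n := by
    have hbin := add_pow p (1-p) n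
    rw [show p + (1-p) = 1 from by ring, one_pow] at hbin
    calc ∑ k ∈ Finset.range (n+1), (n.choose k:ℝ) * p^k * (1-p)^(n-k) * Real.log n
        = (∑ k ∈ Finset.range (n+1), p^k * (1-p)^(n-k) * (n.choose k:ℝ)) * Real.log n := by
          rw [Finset.sum_mul]; exact Finset.sum_congr rfl fun k _ => by ring
      _ = Real.log n := by rw [← hbin]; ring
  have hs3 : ∑ k ∈ Finset.range (n+1), (n.choose k : ℝ) * p^k * (1-p)^(n-k)
          * (((n-k:ℕ):ℝ)/n * Real.log ((n-k:ℕ):ℝ))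
      = (1-p) * fBer (n-1) (1-p) := by
    rw [← key n hn (1-p)]
    rw [← Finset.sum_range_reflect]
    refine Finset.sum_congr rfl fun j hj => ?_
    have hj' : j ≤ n := by
      have := Finset.mem_range.mp hj; omega
    simp only [Nat.add_sub_cancel]
    rw [Nat.choose_symm hj', Nat.sub_sub_self hj']
    rw [show (1:ℝ)-(1-p) = p from by ring]
    ring
  rw [hb, key n hn p, hs3]
end
end

section
/- Fix θ ∈ (0,1). Then, as n → ∞, f(n,θ) = ln(θn) + (1+θ)/(2θn) − (θ²+6θ−1)/(12θ²n²) + O(1/n³); that is, there exist C > 0 and N such that for all n ≥ N, |f(n,θ) − ln(θn) − (1+θ)/(2θn) + (θ²+6θ−1)/(12θ²n²)| ≤ C/n³. -/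
set_option maxHeartbeats 1000000


open Finset Real

noncomputable section


lemma cast_dF (s k : ℕ) : ((k.descFactorial s : ℕ) : ℝ) = ∏ i ∈ Finset.range s, ((k:ℝ) - (i:ℝ)) := by
  induction s with
  | zero => simp
  | succ s ih =>
    rw [Nat.descFactorial_succ, Finset.prod_range_succ, ← ih]
    rcases le_or_gt s k with h | h
    · push_cast [Nat.cast_sub h]
      ring
    · have h0 : k.descFactorial s = 0 := Nat.descFactorial_eq_zero_iff_lt.2 h
      have h0' : k - s = 0 := by omega
      simp [h0, h0']

lemma binom_sum (θ : ℝ) (N : ℕ) :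
    ∑ k ∈ Finset.range (N+1), (N.choose k : ℝ) * θ ^ k * (1 - θ) ^ (N - k) = 1 := by
  calc ∑ k ∈ Finset.range (N+1), (N.choose k : ℝ) * θ ^ k * (1 - θ) ^ (N - k)
      = ∑ k ∈ Finset.range (N+1), θ ^ k * (1 - θ) ^ (N - k) * (N.choose k : ℝ) := by
        refine Finset.sum_congr rfl (fun k _ => by ring)
    _ = (θ + (1 - θ)) ^ N := (add_pow θ (1-θ) N).symm
    _ = 1 := by norm_num

lemma ffmom (θ : ℝ) (n s : ℕ) (hs : s ≤ n) :
    ∑ k ∈ Finset.range (n+1),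
      (n.choose k : ℝ) * θ ^ k * (1 - θ) ^ (n - k) * (∏ i ∈ Finset.range s, ((k:ℝ) - (i:ℝ)))
    = (∏ i ∈ Finset.range s, ((n:ℝ) - (i:ℝ))) * θ ^ s := by
  have hsum : ∀ k : ℕ, (n.choose k : ℝ) * θ ^ k * (1 - θ) ^ (n - k) * (∏ i ∈ Finset.range s, ((k:ℝ) - (i:ℝ)))
      = (n.choose k : ℝ) * θ ^ k * (1 - θ) ^ (n - k) * (k.descFactorial s : ℝ) := fun k => by
    rw [cast_dF]
  rw [Finset.sum_congr rfl (fun k _ => hsum k), ← cast_dF]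
  rw [Finset.range_eq_Ico, ← Finset.sum_Ico_consecutive _ (Nat.zero_le s) (by omega : s ≤ n+1)]
  have hzero : ∑ k ∈ Finset.Ico 0 s,
      (n.choose k : ℝ) * θ ^ k * (1 - θ) ^ (n - k) * (k.descFactorial s : ℝ) = 0 := by
    refine Finset.sum_eq_zero (fun k hk => ?_)
    have hks : k < s := (Finset.mem_Ico.1 hk).2
    simp [Nat.descFactorial_eq_zero_iff_lt.2 hks]
  rw [hzero, zero_add, Finset.sum_Ico_eq_sum_range]
  rw [show n + 1 - s = (n - s) + 1 from by omega]
  have key : ∀ i, i ≤ n - s →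
      (n.choose (s+i) : ℝ) * θ ^ (s+i) * (1 - θ) ^ (n - (s+i)) * ((s+i).descFactorial s : ℝ)
      = ((n.descFactorial s : ℝ) * θ ^ s) * ((( n - s).choose i : ℝ) * θ ^ i * (1 - θ) ^ ((n - s) - i)) := by
    intro i hi
    have hsi : s + i ≤ n := by omega
    have hexp : n - (s+i) = (n - s) - i := by omega
    have f1 := Nat.choose_mul_factorial_mul_factorial hsi
    rw [hexp] at f1
    have f2 := Nat.choose_mul_factorial_mul_factorial (show i ≤ n - s from hi)
    have f3 := Nat.factorial_mul_descFactorial (show s ≤ s + i from by omega)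
    rw [show s + i - s = i from by omega] at f3
    have f4 := Nat.factorial_mul_descFactorial hs
    have c1 : (n.choose (s+i) : ℝ) * ((s+i).factorial : ℝ) * (((n-s)-i).factorial : ℝ) = (n.factorial : ℝ) := by
      exact_mod_cast congrArg (Nat.cast : ℕ → ℝ) f1
    have c2 : (((n-s).choose i : ℝ)) * (i.factorial : ℝ) * (((n-s)-i).factorial : ℝ) = ((n-s).factorial : ℝ) := by
      exact_mod_cast congrArg (Nat.cast : ℕ → ℝ) f2
    have c3 : (i.factorial : ℝ) * ((s+i).descFactorial s : ℝ) = ((s+i).factorial : ℝ) := by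
      exact_mod_cast congrArg (Nat.cast : ℕ → ℝ) f3
    have c4 : ((n-s).factorial : ℝ) * (n.descFactorial s : ℝ) = (n.factorial : ℝ) := by
      exact_mod_cast congrArg (Nat.cast : ℕ → ℝ) f4
    have hid : (n.choose (s+i) : ℝ) * ((s+i).descFactorial s : ℝ)
        = (n.descFactorial s : ℝ) * ((n-s).choose i : ℝ) := by
      have hne : (i.factorial : ℝ) * (((n-s)-i).factorial : ℝ) * ((n-s).factorial : ℝ) ≠ 0 := by
        positivity
      apply mul_right_cancel₀ hne
      calc (n.choose (s+i) : ℝ) * ((s+i).descFactorial s : ℝ) * ((i.factorial : ℝ) * (((n-s)-i).factorial : ℝ) * ((n-s).factorial : ℝ))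
          = ((n.choose (s+i) : ℝ) * ((s+i).factorial : ℝ) * (((n-s)-i).factorial : ℝ)) * ((n-s).factorial : ℝ) := by
            rw [← c3]; ring
        _ = (n.factorial : ℝ) * ((n-s).factorial : ℝ) := by rw [c1]
        _ = (((n-s).factorial : ℝ) * (n.descFactorial s : ℝ)) * ((n-s).factorial : ℝ) := by rw [c4]
        _ = (n.descFactorial s : ℝ) * ((n-s).choose i : ℝ) * ((i.factorial : ℝ) * (((n-s)-i).factorial : ℝ) * ((n-s).factorial : ℝ)) := by
            rw [← c2]; ring
    rw [hexp, pow_add]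
    linear_combination (θ ^ s * θ ^ i * (1 - θ) ^ ((n - s) - i)) * hid
  calc ∑ i ∈ Finset.range ((n-s)+1),
        (n.choose (s+i) : ℝ) * θ ^ (s+i) * (1 - θ) ^ (n - (s+i)) * (((s+i).descFactorial s : ℝ))
      = ∑ i ∈ Finset.range ((n-s)+1),
        ((n.descFactorial s : ℝ) * θ ^ s) * (((n - s).choose i : ℝ) * θ ^ i * (1 - θ) ^ ((n - s) - i)) := by
        refine Finset.sum_congr rfl (fun i hi => ?_)
        have hi' : i ≤ n - s := by
          have := Finset.mem_range.1 hi; omega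
        exact key i hi'
    _ = (n.descFactorial s : ℝ) * θ ^ s := by
        rw [← Finset.mul_sum, binom_sum θ (n-s), mul_one]

lemma mom1 (θ : ℝ) (n : ℕ) (hn : 8 ≤ n) :
    ∑ k ∈ Finset.range (n+1), (n.choose k : ℝ) * θ ^ k * (1 - θ) ^ (n - k) * (((k:ℝ) - (n:ℝ)*θ)^1) = 0 := by
  have h0 := ffmom θ n 0 (by omega)
  have h1 := ffmom θ n 1 (by omega)
  calc ∑ k ∈ Finset.range (n+1), (n.choose k : ℝ) * θ ^ k * (1 - θ) ^ (n - k) * (((k:ℝ) - (n:ℝ)*θ)^1)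
      = ∑ k ∈ Finset.range (n+1), (((-1) * (n:ℝ)^1 * θ^1) * ((n.choose k : ℝ) * θ ^ k * (1 - θ) ^ (n - k) * (∏ i ∈ Finset.range 0, ((k:ℝ) - (i:ℝ)))) + (1) * ((n.choose k : ℝ) * θ ^ k * (1 - θ) ^ (n - k) * (∏ i ∈ Finset.range 1, ((k:ℝ) - (i:ℝ))))) := by
        refine Finset.sum_congr rfl (fun k _ => ?_)
        simp only [Finset.prod_range_succ, Finset.prod_range_zero]
        push_cast
        ring
    _ = 0 := by
        simp only [Finset.sum_add_distrib, ← Finset.mul_sum]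
        rw [h0, h1]
        simp only [Finset.prod_range_succ, Finset.prod_range_zero]
        push_cast
        ring

lemma mom2 (θ : ℝ) (n : ℕ) (hn : 8 ≤ n) :
    ∑ k ∈ Finset.range (n+1), (n.choose k : ℝ) * θ ^ k * (1 - θ) ^ (n - k) * (((k:ℝ) - (n:ℝ)*θ)^2) = 1 * (n:ℝ)^1 * θ^1 + (-1) * (n:ℝ)^1 * θ^2 := by
  have h0 := ffmom θ n 0 (by omega)
  have h1 := ffmom θ n 1 (by omega)
  have h2 := ffmom θ n 2 (by omega)
  calc ∑ k ∈ Finset.range (n+1), (n.choose k : ℝ) * θ ^ k * (1 - θ) ^ (n - k) * (((k:ℝ) - (n:ℝ)*θ)^2)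
      = ∑ k ∈ Finset.range (n+1), ((1 * (n:ℝ)^2 * θ^2) * ((n.choose k : ℝ) * θ ^ k * (1 - θ) ^ (n - k) * (∏ i ∈ Finset.range 0, ((k:ℝ) - (i:ℝ)))) + (1 + (-2) * (n:ℝ)^1 * θ^1) * ((n.choose k : ℝ) * θ ^ k * (1 - θ) ^ (n - k) * (∏ i ∈ Finset.range 1, ((k:ℝ) - (i:ℝ)))) + (1) * ((n.choose k : ℝ) * θ ^ k * (1 - θ) ^ (n - k) * (∏ i ∈ Finset.range 2, ((k:ℝ) - (i:ℝ))))) := by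
        refine Finset.sum_congr rfl (fun k _ => ?_)
        simp only [Finset.prod_range_succ, Finset.prod_range_zero]
        push_cast
        ring
    _ = 1 * (n:ℝ)^1 * θ^1 + (-1) * (n:ℝ)^1 * θ^2 := by
        simp only [Finset.sum_add_distrib, ← Finset.mul_sum]
        rw [h0, h1, h2]
        simp only [Finset.prod_range_succ, Finset.prod_range_zero]
        push_cast
        ring

lemma mom3 (θ : ℝ) (n : ℕ) (hn : 8 ≤ n) :
    ∑ k ∈ Finset.range (n+1), (n.choose k : ℝ) * θ ^ k * (1 - θ) ^ (n - k) * (((k:ℝ) - (n:ℝ)*θ)^3) = 1 * (n:ℝ)^1 * θ^1 + (-3) * (n:ℝ)^1 * θ^2 + 2 * (n:ℝ)^1 * θ^3 := by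
  have h0 := ffmom θ n 0 (by omega)
  have h1 := ffmom θ n 1 (by omega)
  have h2 := ffmom θ n 2 (by omega)
  have h3 := ffmom θ n 3 (by omega)
  calc ∑ k ∈ Finset.range (n+1), (n.choose k : ℝ) * θ ^ k * (1 - θ) ^ (n - k) * (((k:ℝ) - (n:ℝ)*θ)^3)
      = ∑ k ∈ Finset.range (n+1), (((-1) * (n:ℝ)^3 * θ^3) * ((n.choose k : ℝ) * θ ^ k * (1 - θ) ^ (n - k) * (∏ i ∈ Finset.range 0, ((k:ℝ) - (i:ℝ)))) + (1 + (-3) * (n:ℝ)^1 * θ^1 + 3 * (n:ℝ)^2 * θ^2) * ((n.choose k : ℝ) * θ ^ k * (1 - θ) ^ (n - k) * (∏ i ∈ Finset.range 1, ((k:ℝ) - (i:ℝ)))) + (3 + (-3) * (n:ℝ)^1 * θ^1) * ((n.choose k : ℝ) * θ ^ k * (1 - θ) ^ (n - k) * (∏ i ∈ Finset.range 2, ((k:ℝ) - (i:ℝ)))) + (1) * ((n.choose k : ℝ) * θ ^ k * (1 - θ) ^ (n - k) * (∏ i ∈ Finset.range 3, ((k:ℝ) - (i:ℝ))))) := by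
        refine Finset.sum_congr rfl (fun k _ => ?_)
        simp only [Finset.prod_range_succ, Finset.prod_range_zero]
        push_cast
        ring
    _ = 1 * (n:ℝ)^1 * θ^1 + (-3) * (n:ℝ)^1 * θ^2 + 2 * (n:ℝ)^1 * θ^3 := by
        simp only [Finset.sum_add_distrib, ← Finset.mul_sum]
        rw [h0, h1, h2, h3]
        simp only [Finset.prod_range_succ, Finset.prod_range_zero]
        push_cast
        ring

lemma mom4 (θ : ℝ) (n : ℕ) (hn : 8 ≤ n) :
    ∑ k ∈ Finset.range (n+1), (n.choose k : ℝ) * θ ^ k * (1 - θ) ^ (n - k) * (((k:ℝ) - (n:ℝ)*θ)^4) = 1 * (n:ℝ)^1 * θ^1 + (-7) * (n:ℝ)^1 * θ^2 + 12 * (n:ℝ)^1 * θ^3 + (-6) * (n:ℝ)^1 * θ^4 + 3 * (n:ℝ)^2 * θ^2 + (-6) * (n:ℝ)^2 * θ^3 + 3 * (n:ℝ)^2 * θ^4 := by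
  have h0 := ffmom θ n 0 (by omega)
  have h1 := ffmom θ n 1 (by omega)
  have h2 := ffmom θ n 2 (by omega)
  have h3 := ffmom θ n 3 (by omega)
  have h4 := ffmom θ n 4 (by omega)
  calc ∑ k ∈ Finset.range (n+1), (n.choose k : ℝ) * θ ^ k * (1 - θ) ^ (n - k) * (((k:ℝ) - (n:ℝ)*θ)^4)
      = ∑ k ∈ Finset.range (n+1), ((1 * (n:ℝ)^4 * θ^4) * ((n.choose k : ℝ) * θ ^ k * (1 - θ) ^ (n - k) * (∏ i ∈ Finset.range 0, ((k:ℝ) - (i:ℝ)))) + (1 + (-4) * (n:ℝ)^1 * θ^1 + 6 * (n:ℝ)^2 * θ^2 + (-4) * (n:ℝ)^3 * θ^3) * ((n.choose k : ℝ) * θ ^ k * (1 - θ) ^ (n - k) * (∏ i ∈ Finset.range 1, ((k:ℝ) - (i:ℝ)))) + (7 + (-12) * (n:ℝ)^1 * θ^1 + 6 * (n:ℝ)^2 * θ^2) * ((n.choose k : ℝ) * θ ^ k * (1 - θ) ^ (n - k) * (∏ i ∈ Finset.range 2, ((k:ℝ) - (i:ℝ)))) + (6 + (-4) * (n:ℝ)^1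 * θ^1) * ((n.choose k : ℝ) * θ ^ k * (1 - θ) ^ (n - k) * (∏ i ∈ Finset.range 3, ((k:ℝ) - (i:ℝ)))) + (1) * ((n.choose k : ℝ) * θ ^ k * (1 - θ) ^ (n - k) * (∏ i ∈ Finset.range 4, ((k:ℝ) - (i:ℝ))))) := by
        refine Finset.sum_congr rfl (fun k _ => ?_)
        simp only [Finset.prod_range_succ, Finset.prod_range_zero]
        push_cast
        ring
    _ = 1 * (n:ℝ)^1 * θ^1 + (-7) * (n:ℝ)^1 * θ^2 + 12 * (n:ℝ)^1 * θ^3 + (-6) * (n:ℝ)^1 * θ^4 + 3 * (n:ℝ)^2 * θ^2 + (-6) * (n:ℝ)^2 * θ^3 + 3 * (n:ℝ)^2 * θ^4 := by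
        simp only [Finset.sum_add_distrib, ← Finset.mul_sum]
        rw [h0, h1, h2, h3, h4]
        simp only [Finset.prod_range_succ, Finset.prod_range_zero]
        push_cast
        ring

lemma mom5 (θ : ℝ) (n : ℕ) (hn : 8 ≤ n) :
    ∑ k ∈ Finset.range (n+1), (n.choose k : ℝ) * θ ^ k * (1 - θ) ^ (n - k) * (((k:ℝ) - (n:ℝ)*θ)^5) = 1 * (n:ℝ)^1 * θ^1 + (-15) * (n:ℝ)^1 * θ^2 + 50 * (n:ℝ)^1 * θ^3 + (-60) * (n:ℝ)^1 * θ^4 + 24 * (n:ℝ)^1 * θ^5 + 10 * (n:ℝ)^2 * θ^2 + (-40) * (n:ℝ)^2 * θ^3 + 50 * (n:ℝ)^2 * θ^4 + (-20) * (n:ℝ)^2 * θ^5 := by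
  have h0 := ffmom θ n 0 (by omega)
  have h1 := ffmom θ n 1 (by omega)
  have h2 := ffmom θ n 2 (by omega)
  have h3 := ffmom θ n 3 (by omega)
  have h4 := ffmom θ n 4 (by omega)
  have h5 := ffmom θ n 5 (by omega)
  calc ∑ k ∈ Finset.range (n+1), (n.choose k : ℝ) * θ ^ k * (1 - θ) ^ (n - k) * (((k:ℝ) - (n:ℝ)*θ)^5)
      = ∑ k ∈ Finset.range (n+1), (((-1) * (n:ℝ)^5 * θ^5) * ((n.choose k : ℝ) * θ ^ k * (1 - θ) ^ (n - k) * (∏ i ∈ Finset.range 0, ((k:ℝ) - (i:ℝ)))) + (1 + (-5) * (n:ℝ)^1 * θ^1 + 10 * (n:ℝ)^2 * θ^2 + (-10) * (n:ℝ)^3 * θ^3 + 5 * (n:ℝ)^4 * θ^4) * ((n.choose k : ℝ) * θ ^ k * (1 - θ) ^ (n - k) * (∏ i ∈ Finset.range 1, ((k:ℝ) - (i:ℝ)))) + (15 + (-35) * (n:ℝ)^1 * θ^1 + 30 * (n:ℝ)^2 * θ^2 + (-10) * (n:ℝ)^3 * θ^3) * ((n.choose k : ℝ) * θ ^ k * (1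 - θ) ^ (n - k) * (∏ i ∈ Finset.range 2, ((k:ℝ) - (i:ℝ)))) + (25 + (-30) * (n:ℝ)^1 * θ^1 + 10 * (n:ℝ)^2 * θ^2) * ((n.choose k : ℝ) * θ ^ k * (1 - θ) ^ (n - k) * (∏ i ∈ Finset.range 3, ((k:ℝ) - (i:ℝ)))) + (10 + (-5) * (n:ℝ)^1 * θ^1) * ((n.choose k : ℝ) * θ ^ k * (1 - θ) ^ (n - k) * (∏ i ∈ Finset.range 4, ((k:ℝ) - (i:ℝ)))) + (1) * ((n.choose k : ℝ) * θ ^ k * (1 - θ) ^ (n - k) * (∏ i ∈ Finset.range 5, ((k:ℝ) - (i:ℝ))))) := by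
        refine Finset.sum_congr rfl (fun k _ => ?_)
        simp only [Finset.prod_range_succ, Finset.prod_range_zero]
        push_cast
        ring
    _ = 1 * (n:ℝ)^1 * θ^1 + (-15) * (n:ℝ)^1 * θ^2 + 50 * (n:ℝ)^1 * θ^3 + (-60) * (n:ℝ)^1 * θ^4 + 24 * (n:ℝ)^1 * θ^5 + 10 * (n:ℝ)^2 * θ^2 + (-40) * (n:ℝ)^2 * θ^3 + 50 * (n:ℝ)^2 * θ^4 + (-20) * (n:ℝ)^2 * θ^5 := by
        simp only [Finset.sum_add_distrib, ← Finset.mul_sum]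
        rw [h0, h1, h2, h3, h4, h5]
        simp only [Finset.prod_range_succ, Finset.prod_range_zero]
        push_cast
        ring

lemma mom6 (θ : ℝ) (n : ℕ) (hn : 8 ≤ n) :
    ∑ k ∈ Finset.range (n+1), (n.choose k : ℝ) * θ ^ k * (1 - θ) ^ (n - k) * (((k:ℝ) - (n:ℝ)*θ)^6) = 1 * (n:ℝ)^1 * θ^1 + (-31) * (n:ℝ)^1 * θ^2 + 180 * (n:ℝ)^1 * θ^3 + (-390) * (n:ℝ)^1 * θ^4 + 360 * (n:ℝ)^1 * θ^5 + (-120) * (n:ℝ)^1 * θ^6 + 25 * (n:ℝ)^2 * θ^2 + (-180) * (n:ℝ)^2 * θ^3 + 415 * (n:ℝ)^2 * θ^4 + (-390) * (n:ℝ)^2 * θ^5 + 130 * (n:ℝ)^2 * θ^6 + 15 * (n:ℝ)^3 * θ^3 + (-45) * (n:ℝ)^3 * θ^4 + 45 * (n:ℝ)^3 * θ^5 + (-15) * (n:ℝ)^3 * θ^6 := by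
  have h0 := ffmom θ n 0 (by omega)
  have h1 := ffmom θ n 1 (by omega)
  have h2 := ffmom θ n 2 (by omega)
  have h3 := ffmom θ n 3 (by omega)
  have h4 := ffmom θ n 4 (by omega)
  have h5 := ffmom θ n 5 (by omega)
  have h6 := ffmom θ n 6 (by omega)
  calc ∑ k ∈ Finset.range (n+1), (n.choose k : ℝ) * θ ^ k * (1 - θ) ^ (n - k) * (((k:ℝ) - (n:ℝ)*θ)^6)
      = ∑ k ∈ Finset.range (n+1), ((1 * (n:ℝ)^6 * θ^6) * ((n.choose k : ℝ) * θ ^ k * (1 - θ) ^ (n - k) * (∏ i ∈ Finset.range 0, ((k:ℝ) - (i:ℝ)))) + (1 + (-6) * (n:ℝ)^1 * θ^1 + 15 * (n:ℝ)^2 * θ^2 + (-20) * (n:ℝ)^3 * θ^3 + 15 * (n:ℝ)^4 * θ^4 + (-6) * (n:ℝ)^5 * θ^5) * ((n.choose k : ℝ) * θ ^ k * (1 - θ) ^ (n - k) * (∏ i ∈ Finset.range 1, ((k:ℝ) - (i:ℝ)))) + (31 + (-90) * (n:ℝ)^1 * θ^1 + 105 * (n:ℝ)^2 * θ^2 + (-60)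 * (n:ℝ)^3 * θ^3 + 15 * (n:ℝ)^4 * θ^4) * ((n.choose k : ℝ) * θ ^ k * (1 - θ) ^ (n - k) * (∏ i ∈ Finset.range 2, ((k:ℝ) - (i:ℝ)))) + (90 + (-150) * (n:ℝ)^1 * θ^1 + 90 * (n:ℝ)^2 * θ^2 + (-20) * (n:ℝ)^3 * θ^3) * ((n.choose k : ℝ) * θ ^ k * (1 - θ) ^ (n - k) * (∏ i ∈ Finset.range 3, ((k:ℝ) - (i:ℝ)))) + (65 + (-60) * (n:ℝ)^1 * θ^1 + 15 * (n:ℝ)^2 * θ^2) * ((n.choose k : ℝ) * θ ^ k * (1 - θ) ^ (n - k) * (∏ i ∈ Finset.range 4, ((k:ℝ) - (i:ℝ)))) + (15 + (-6) * (n:ℝ)^1 * θ^1) * ((n.choose k : ℝ) * θ ^ k * (1 - θ) ^ (n - k) * (∏ i ∈ Finset.range 5, ((k:ℝ) - (i:ℝ)))) + (1) * ((n.choose k : ℝ) * θ ^ k * (1 - θ) ^ (n - k) * (∏ i ∈ Finset.range 6, ((k:ℝ) - (i:ℝ))))) := by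
        refine Finset.sum_congr rfl (fun k _ => ?_)
        simp only [Finset.prod_range_succ, Finset.prod_range_zero]
        push_cast
        ring
    _ = 1 * (n:ℝ)^1 * θ^1 + (-31) * (n:ℝ)^1 * θ^2 + 180 * (n:ℝ)^1 * θ^3 + (-390) * (n:ℝ)^1 * θ^4 + 360 * (n:ℝ)^1 * θ^5 + (-120) * (n:ℝ)^1 * θ^6 + 25 * (n:ℝ)^2 * θ^2 + (-180) * (n:ℝ)^2 * θ^3 + 415 * (n:ℝ)^2 * θ^4 + (-390) * (n:ℝ)^2 * θ^5 + 130 * (n:ℝ)^2 * θ^6 + 15 * (n:ℝ)^3 * θ^3 + (-45) * (n:ℝ)^3 * θ^4 + 45 * (n:ℝ)^3 * θ^5 + (-15) * (n:ℝ)^3 * θ^6 := by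
        simp only [Finset.sum_add_distrib, ← Finset.mul_sum]
        rw [h0, h1, h2, h3, h4, h5, h6]
        simp only [Finset.prod_range_succ, Finset.prod_range_zero]
        push_cast
        ring

lemma mom8 (θ : ℝ) (n : ℕ) (hn : 8 ≤ n) :
    ∑ k ∈ Finset.range (n+1), (n.choose k : ℝ) * θ ^ k * (1 - θ) ^ (n - k) * (((k:ℝ) - (n:ℝ)*θ)^8) = 1 * (n:ℝ)^1 * θ^1 + (-127) * (n:ℝ)^1 * θ^2 + 1932 * (n:ℝ)^1 * θ^3 + (-10206) * (n:ℝ)^1 * θ^4 + 25200 * (n:ℝ)^1 * θ^5 + (-31920) * (n:ℝ)^1 * θ^6 + 20160 * (n:ℝ)^1 * θ^7 + (-5040) * (n:ℝ)^1 * θ^8 + 119 * (n:ℝ)^2 * θ^2 + (-2394) * (n:ℝ)^2 * θ^3 + 13895 * (n:ℝ)^2 * θ^4 + (-35700) * (n:ℝ)^2 * θ^5 + 46004 * (n:ℝ)^2 * θ^6 + (-29232) * (n:ℝ)^2 * θ^7 + 7308 * (n:ℝ)^2 * θ^8 + 490 * (n:ℝ)^3 * θ^3 + (-3850) * (n:ℝ)^3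 * θ^4 + 10990 * (n:ℝ)^3 * θ^5 + (-14770) * (n:ℝ)^3 * θ^6 + 9520 * (n:ℝ)^3 * θ^7 + (-2380) * (n:ℝ)^3 * θ^8 + 105 * (n:ℝ)^4 * θ^4 + (-420) * (n:ℝ)^4 * θ^5 + 630 * (n:ℝ)^4 * θ^6 + (-420) * (n:ℝ)^4 * θ^7 + 105 * (n:ℝ)^4 * θ^8 := by
  have h0 := ffmom θ n 0 (by omega)
  have h1 := ffmom θ n 1 (by omega)
  have h2 := ffmom θ n 2 (by omega)
  have h3 := ffmom θ n 3 (by omega)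
  have h4 := ffmom θ n 4 (by omega)
  have h5 := ffmom θ n 5 (by omega)
  have h6 := ffmom θ n 6 (by omega)
  have h7 := ffmom θ n 7 (by omega)
  have h8 := ffmom θ n 8 (by omega)
  calc ∑ k ∈ Finset.range (n+1), (n.choose k : ℝ) * θ ^ k * (1 - θ) ^ (n - k) * (((k:ℝ) - (n:ℝ)*θ)^8)
      = ∑ k ∈ Finset.range (n+1), ((1 * (n:ℝ)^8 * θ^8) * ((n.choose k : ℝ) * θ ^ k * (1 - θ) ^ (n - k) * (∏ i ∈ Finset.range 0, ((k:ℝ) - (i:ℝ)))) + (1 + (-8) * (n:ℝ)^1 * θ^1 + 28 * (n:ℝ)^2 * θ^2 + (-56) * (n:ℝ)^3 * θ^3 + 70 * (n:ℝ)^4 * θ^4 + (-56) * (n:ℝ)^5 * θ^5 + 28 * (n:ℝ)^6 * θ^6 + (-8) * (n:ℝ)^7 * θ^7) * ((n.choose k : ℝ) * θ ^ k * (1 - θ) ^ (n - k) * (∏ i ∈ Finset.range 1, ((k:ℝ) - (i:ℝ)))) + (127 + (-504) * (n:ℝ)^1 * θ^1 + 868 * (n:ℝ)^2 * θ^2 +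 (-840) * (n:ℝ)^3 * θ^3 + 490 * (n:ℝ)^4 * θ^4 + (-168) * (n:ℝ)^5 * θ^5 + 28 * (n:ℝ)^6 * θ^6) * ((n.choose k : ℝ) * θ ^ k * (1 - θ) ^ (n - k) * (∏ i ∈ Finset.range 2, ((k:ℝ) - (i:ℝ)))) + (966 + (-2408) * (n:ℝ)^1 * θ^1 + 2520 * (n:ℝ)^2 * θ^2 + (-1400) * (n:ℝ)^3 * θ^3 + 420 * (n:ℝ)^4 * θ^4 + (-56) * (n:ℝ)^5 * θ^5) * ((n.choose k : ℝ) * θ ^ k * (1 - θ) ^ (n - k) * (∏ i ∈ Finset.range 3, ((k:ℝ) - (i:ℝ)))) + (1701 + (-2800) * (n:ℝ)^1 * θ^1 + 1820 * (n:ℝ)^2 * θ^2 + (-560) * (n:ℝ)^3 * θ^3 + 70 * (n:ℝ)^4 * θ^4) * ((n.choose k : ℝ) * θ ^ k * (1 - θ) ^ (n - k) * (∏ i ∈ Finset.range 4, ((k:ℝ) - (i:ℝ)))) + (1050 + (-1120) * (n:ℝ)^1 * θ^1 + 420 * (n:ℝ)^2 * θ^2 + (-56) * (n:ℝ)^3 *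 θ^3) * ((n.choose k : ℝ) * θ ^ k * (1 - θ) ^ (n - k) * (∏ i ∈ Finset.range 5, ((k:ℝ) - (i:ℝ)))) + (266 + (-168) * (n:ℝ)^1 * θ^1 + 28 * (n:ℝ)^2 * θ^2) * ((n.choose k : ℝ) * θ ^ k * (1 - θ) ^ (n - k) * (∏ i ∈ Finset.range 6, ((k:ℝ) - (i:ℝ)))) + (28 + (-8) * (n:ℝ)^1 * θ^1) * ((n.choose k : ℝ) * θ ^ k * (1 - θ) ^ (n - k) * (∏ i ∈ Finset.range 7, ((k:ℝ) - (i:ℝ)))) + (1) * ((n.choose k : ℝ) * θ ^ k * (1 - θ) ^ (n - k) * (∏ i ∈ Finset.range 8, ((k:ℝ) - (i:ℝ))))) := by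
        refine Finset.sum_congr rfl (fun k _ => ?_)
        simp only [Finset.prod_range_succ, Finset.prod_range_zero]
        push_cast
        ring
    _ = 1 * (n:ℝ)^1 * θ^1 + (-127) * (n:ℝ)^1 * θ^2 + 1932 * (n:ℝ)^1 * θ^3 + (-10206) * (n:ℝ)^1 * θ^4 + 25200 * (n:ℝ)^1 * θ^5 + (-31920) * (n:ℝ)^1 * θ^6 + 20160 * (n:ℝ)^1 * θ^7 + (-5040) * (n:ℝ)^1 * θ^8 + 119 * (n:ℝ)^2 * θ^2 + (-2394) * (n:ℝ)^2 * θ^3 + 13895 * (n:ℝ)^2 * θ^4 + (-35700) * (n:ℝ)^2 * θ^5 + 46004 * (n:ℝ)^2 * θ^6 + (-29232) * (n:ℝ)^2 * θ^7 + 7308 * (n:ℝ)^2 * θ^8 + 490 * (n:ℝ)^3 * θ^3 + (-3850) * (n:ℝ)^3 * θ^4 + 10990 * (n:ℝ)^3 * θ^5 + (-14770) * (n:ℝ)^3 * θ^6 + 9520 * (n:ℝ)^3 * θ^7 + (-2380) * (n:ℝ)^3 * θ^8 + 105 * (n:ℝ)^4 * θ^4 + (-420) * (n:ℝ)^4 *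 θ^5 + 630 * (n:ℝ)^4 * θ^6 + (-420) * (n:ℝ)^4 * θ^7 + 105 * (n:ℝ)^4 * θ^8 := by
        simp only [Finset.sum_add_distrib, ← Finset.mul_sum]
        rw [h0, h1, h2, h3, h4, h5, h6, h7, h8]
        simp only [Finset.prod_range_succ, Finset.prod_range_zero]
        push_cast
        ring








lemma abs_comb (b a1 a2 a3 a4 a5 : ℝ) :
    |b + a1 - a2 + a3 - a4 + a5| ≤ |b| + |a1| + |a2| + |a3| + |a4| + |a5| := by
  calc |b + a1 - a2 + a3 - a4 + a5| ≤ |b + a1 - a2 + a3 - a4| + |a5| := abs_add_le _ _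
    _ ≤ (|b + a1 - a2 + a3| + |a4|) + |a5| := by
        have := abs_sub (b + a1 - a2 + a3) a4; linarith
    _ ≤ ((|b + a1 - a2| + |a3|) + |a4|) + |a5| := by
        have := abs_add_le (b + a1 - a2) a3; linarith
    _ ≤ (((|b + a1| + |a2|) + |a3|) + |a4|) + |a5| := by
        have := abs_sub (b + a1) a2; linarith
    _ ≤ |b| + |a1| + |a2| + |a3| + |a4| + |a5| := by
        have := abs_add_le b a1; linarith

lemma ptCore (θ N x : ℝ) (hθ0 : 0 < θ) (hθ1 : θ < 1) (hx0 : 0 ≤ x) (hxN : x ≤ N) (hN1 : 1 ≤ N) :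
    |Real.log (1+x) - (Real.log (1+N*θ) + (x - N*θ)/(1+N*θ) - (x-N*θ)^2/(2*(1+N*θ)^2)
      + (x-N*θ)^3/(3*(1+N*θ)^3) - (x-N*θ)^4/(4*(1+N*θ)^4) + (x-N*θ)^5/(5*(1+N*θ)^5))|
    ≤ 2*(x-N*θ)^6/(1+N*θ)^6 + ((2+5/θ^5)*N) * (256*(x-N*θ)^8/(1+N*θ)^8) := by
  have hμ0 : 0 ≤ N*θ := by positivity
  have hm0 : (0:ℝ) < 1 + N*θ := by linarith
  rcases le_or_gt |x - N*θ| ((1+N*θ)/2) with hgood | hbad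
  · -- good case
    set t : ℝ := (x - N*θ)/(1+N*θ) with ht
    have htm : x - N*θ = t * (1+N*θ) := by rw [ht]; field_simp
    have ht2 : |t| ≤ 1/2 := by
      rw [ht, abs_div, abs_of_pos hm0, div_le_iff₀ hm0]
      linarith
    have habs := abs_le.1 ht2
    have h1t : 0 < 1 + t := by linarith [habs.1]
    have hlog : Real.log (1+x) = Real.log (1+N*θ) + Real.log (1+t) := by
      rw [← Real.log_mul hm0.ne' h1t.ne']
      congr 1
      rw [ht]
      field_simp
      ring
    have hmain := Real.abs_log_sub_add_sum_range_le (x := -t) (by rw [abs_neg]; linarith) 5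
    have hsum : (∑ i ∈ Finset.range 5, (-t)^(i+1)/(i+1)) = -(t - t^2/2 + t^3/3 - t^4/4 + t^5/5) := by
      simp [Finset.sum_range_succ]
      norm_num
      ring
    rw [hsum] at hmain
    have hmain' : |Real.log (1+t) - (t - t^2/2 + t^3/3 - t^4/4 + t^5/5)| ≤ |(-t)|^6/(1-|(-t)|) := by
      have he : -(t - t^2/2 + t^3/3 - t^4/4 + t^5/5) + Real.log (1 - -t)
          = Real.log (1+t) - (t - t^2/2 + t^3/3 - t^4/4 + t^5/5) := by
        rw [sub_neg_eq_add]; ring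
      rwa [he] at hmain
    rw [abs_neg] at hmain'
    have ht6 : |t|^6 = t^6 := by
      rw [← abs_pow, abs_of_nonneg (by positivity)]
    have hden : 1/2 ≤ 1 - |t| := by linarith
    have hb2 : |t|^6/(1-|t|) ≤ 2*t^6 := by
      rw [ht6, div_le_iff₀ (by linarith : (0:ℝ) < 1 - |t|)]
      nlinarith [pow_nonneg (abs_nonneg t) 6, sq_nonneg t, pow_nonneg (sq_nonneg t) 3]
    have heq : Real.log (1+x) - (Real.log (1+N*θ) + (x - N*θ)/(1+N*θ) - (x-N*θ)^2/(2*(1+N*θ)^2)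
        + (x-N*θ)^3/(3*(1+N*θ)^3) - (x-N*θ)^4/(4*(1+N*θ)^4) + (x-N*θ)^5/(5*(1+N*θ)^5))
        = Real.log (1+t) - (t - t^2/2 + t^3/3 - t^4/4 + t^5/5) := by
      rw [hlog, htm]
      field_simp
      ring
    rw [heq]
    have hfirst : 2*(x-N*θ)^6/(1+N*θ)^6 = 2*t^6 := by
      rw [htm]
      field_simp
    have hsec : 0 ≤ ((2+5/θ^5)*N) * (256*(x-N*θ)^8/(1+N*θ)^8) := by positivity
    rw [hfirst]
    linarith [hmain'.trans hb2]
  · -- bad case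
    have h1x : (0:ℝ) < 1 + x := by linarith
    have hlx : Real.log (1+x) ≤ N := by
      have := Real.log_le_sub_one_of_pos h1x
      linarith
    have hlx0 : 0 ≤ Real.log (1+x) := Real.log_nonneg (by linarith)
    have hcm : θ*N ≤ 1 + N*θ := by
      have := mul_comm θ N; nlinarith
    have hlm : Real.log (1+N*θ) ≤ N := by
      have h := Real.log_le_sub_one_of_pos hm0
      nlinarith
    have hlm0 : 0 ≤ Real.log (1+N*θ) := Real.log_nonneg (by linarith)
    have habsxm : |x - N*θ| ≤ N := by
      rw [abs_le]
      constructor <;> nlinarith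
    have hratio : |x - N*θ|/(1+N*θ) ≤ 1/θ := by
      rw [div_le_div_iff₀ hm0 hθ0]
      nlinarith [abs_nonneg (x - N*θ)]
    have hpow : ∀ j : ℕ, 1 ≤ j → j ≤ 5 → |x - N*θ|^j/(1+N*θ)^j ≤ 1/θ^5 := by
      intro j hj1 hj5
      rw [← div_pow]
      calc (|x - N*θ|/(1+N*θ))^j ≤ (1/θ)^j := by
            exact pow_le_pow_left₀ (by positivity) hratio j
        _ ≤ (1/θ)^5 := by
            apply pow_le_pow_right₀ _ hj5
            rw [le_div_iff₀ hθ0]; linarith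
        _ = 1/θ^5 := by rw [div_pow, one_pow]
    have hA1 : |(x - N*θ)/(1+N*θ)| ≤ 1/θ^5 := by
      rw [abs_div, abs_of_pos hm0]
      have := hpow 1 le_rfl (by norm_num)
      simpa using this
    have hA2 : |(x-N*θ)^2/(2*(1+N*θ)^2)| ≤ 1/θ^5 := by
      rw [abs_div, abs_pow, abs_of_pos (by positivity : (0:ℝ) < 2*(1+N*θ)^2)]
      calc |x-N*θ|^2/(2*(1+N*θ)^2) ≤ |x-N*θ|^2/(1+N*θ)^2 := by
            apply div_le_div_of_nonneg_left (by positivity) (by positivity)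
            linarith [pow_pos hm0 2]
        _ ≤ 1/θ^5 := hpow 2 (by norm_num) (by norm_num)
    have hA3 : |(x-N*θ)^3/(3*(1+N*θ)^3)| ≤ 1/θ^5 := by
      rw [abs_div, abs_pow, abs_of_pos (by positivity : (0:ℝ) < 3*(1+N*θ)^3)]
      calc |x-N*θ|^3/(3*(1+N*θ)^3) ≤ |x-N*θ|^3/(1+N*θ)^3 := by
            apply div_le_div_of_nonneg_left (by positivity) (by positivity)
            linarith [pow_pos hm0 3]
        _ ≤ 1/θ^5 := hpow 3 (by norm_num) (by norm_num)
    have hA4 : |(x-N*θ)^4/(4*(1+N*θ)^4)| ≤ 1/θ^5 := by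
      rw [abs_div, abs_pow, abs_of_pos (by positivity : (0:ℝ) < 4*(1+N*θ)^4)]
      calc |x-N*θ|^4/(4*(1+N*θ)^4) ≤ |x-N*θ|^4/(1+N*θ)^4 := by
            apply div_le_div_of_nonneg_left (by positivity) (by positivity)
            linarith [pow_pos hm0 4]
        _ ≤ 1/θ^5 := hpow 4 (by norm_num) (by norm_num)
    have hA5 : |(x-N*θ)^5/(5*(1+N*θ)^5)| ≤ 1/θ^5 := by
      rw [abs_div, abs_pow, abs_of_pos (by positivity : (0:ℝ) < 5*(1+N*θ)^5)]
      calc |x-N*θ|^5/(5*(1+N*θ)^5) ≤ |x-N*θ|^5/(1+N*θ)^5 := by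
            apply div_le_div_of_nonneg_left (by positivity) (by positivity)
            linarith [pow_pos hm0 5]
        _ ≤ 1/θ^5 := hpow 5 (by norm_num) (by norm_num)
    have htri : |Real.log (1+x) - (Real.log (1+N*θ) + (x - N*θ)/(1+N*θ) - (x-N*θ)^2/(2*(1+N*θ)^2)
        + (x-N*θ)^3/(3*(1+N*θ)^3) - (x-N*θ)^4/(4*(1+N*θ)^4) + (x-N*θ)^5/(5*(1+N*θ)^5))|
        ≤ |Real.log (1+x)| + (|Real.log (1+N*θ)| + |(x - N*θ)/(1+N*θ)| + |(x-N*θ)^2/(2*(1+N*θ)^2)|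
          + |(x-N*θ)^3/(3*(1+N*θ)^3)| + |(x-N*θ)^4/(4*(1+N*θ)^4)| + |(x-N*θ)^5/(5*(1+N*θ)^5)|) := by
      have h1 := abs_sub (Real.log (1+x)) (Real.log (1+N*θ) + (x - N*θ)/(1+N*θ) - (x-N*θ)^2/(2*(1+N*θ)^2)
        + (x-N*θ)^3/(3*(1+N*θ)^3) - (x-N*θ)^4/(4*(1+N*θ)^4) + (x-N*θ)^5/(5*(1+N*θ)^5))
      have h2 := abs_comb (Real.log (1+N*θ)) ((x - N*θ)/(1+N*θ)) ((x-N*θ)^2/(2*(1+N*θ)^2))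
        ((x-N*θ)^3/(3*(1+N*θ)^3)) ((x-N*θ)^4/(4*(1+N*θ)^4)) ((x-N*θ)^5/(5*(1+N*θ)^5))
      linarith
    have habs : |Real.log (1+x) - (Real.log (1+N*θ) + (x - N*θ)/(1+N*θ) - (x-N*θ)^2/(2*(1+N*θ)^2)
        + (x-N*θ)^3/(3*(1+N*θ)^3) - (x-N*θ)^4/(4*(1+N*θ)^4) + (x-N*θ)^5/(5*(1+N*θ)^5))|
        ≤ (2+5/θ^5)*N := by
      have hb1 : |Real.log (1+x)| ≤ N := by rw [abs_of_nonneg hlx0]; exact hlx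
      have hb2 : |Real.log (1+N*θ)| ≤ N := by rw [abs_of_nonneg hlm0]; exact hlm
      have h5N : 5*(1/θ^5) ≤ (5/θ^5)*N := by
        have h50 : (0:ℝ) ≤ 1/θ^5 := by positivity
        have h51 := mul_le_mul_of_nonneg_left hN1 h50
        rw [show (5:ℝ)/θ^5 = 5*(1/θ^5) by ring]
        nlinarith [h51]
      linarith [htri, hA1, hA2, hA3, hA4, hA5]
    have h256 : 1 ≤ 256*(x-N*θ)^8/(1+N*θ)^8 := by
      have he : |x-N*θ|^8 = (x-N*θ)^8 := by rw [← abs_pow, abs_of_nonneg (by positivity)]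
      have h2 : ((1+N*θ)/2)^8 ≤ |x-N*θ|^8 := pow_le_pow_left₀ (by positivity) hbad.le 8
      rw [le_div_iff₀ (by positivity : (0:ℝ) < (1+N*θ)^8)]
      nlinarith [h2, he]
    have hBn0 : 0 ≤ (2+5/θ^5)*N := by positivity
    have hfin := mul_le_mul_of_nonneg_left h256 hBn0
    have hsec : 0 ≤ 2*(x-N*θ)^6/(1+N*θ)^6 := by positivity
    rw [mul_one] at hfin
    linarith [habs]

def tay (θ : ℝ) (n : ℕ) (x : ℝ) : ℝ :=
  Real.log (1+(n:ℝ)*θ) + (x - (n:ℝ)*θ)/(1+(n:ℝ)*θ) - (x-(n:ℝ)*θ)^2/(2*(1+(n:ℝ)*θ)^2)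
    + (x-(n:ℝ)*θ)^3/(3*(1+(n:ℝ)*θ)^3) - (x-(n:ℝ)*θ)^4/(4*(1+(n:ℝ)*θ)^4) + (x-(n:ℝ)*θ)^5/(5*(1+(n:ℝ)*θ)^5)

lemma expT (θ : ℝ) (n : ℕ) (hn : 8 ≤ n) :
    ∑ k ∈ Finset.range (n+1), (n.choose k : ℝ) * θ ^ k * (1 - θ) ^ (n - k) * tay θ n (k:ℝ)
    = Real.log (1+(n:ℝ)*θ) - (1 * (n:ℝ)^1 * θ^1 + (-1) * (n:ℝ)^1 * θ^2)/(2*(1+(n:ℝ)*θ)^2) + (1 * (n:ℝ)^1 * θ^1 + (-3) * (n:ℝ)^1 * θ^2 + 2 * (n:ℝ)^1 * θ^3)/(3*(1+(n:ℝ)*θ)^3) - (1 * (n:ℝ)^1 * θ^1 + (-7) * (n:ℝ)^1 * θ^2 + 12 * (n:ℝ)^1 * θ^3 + (-6) * (n:ℝ)^1 * θ^4 + 3 * (n:ℝ)^2 * θ^2 + (-6) * (n:ℝ)^2 * θ^3 + 3 * (n:ℝ)^2 * θ^4)/(4*(1+(n:ℝ)*θ)^4) + (1 * (n:ℝ)^1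 * θ^1 + (-15) * (n:ℝ)^1 * θ^2 + 50 * (n:ℝ)^1 * θ^3 + (-60) * (n:ℝ)^1 * θ^4 + 24 * (n:ℝ)^1 * θ^5 + 10 * (n:ℝ)^2 * θ^2 + (-40) * (n:ℝ)^2 * θ^3 + 50 * (n:ℝ)^2 * θ^4 + (-20) * (n:ℝ)^2 * θ^5)/(5*(1+(n:ℝ)*θ)^5) := by
  have h0 := binom_sum θ n
  have m1 := mom1 θ n hn
  have m2 := mom2 θ n hn
  have m3 := mom3 θ n hn
  have m4 := mom4 θ n hn
  have m5 := mom5 θ n hn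
  calc ∑ k ∈ Finset.range (n+1), (n.choose k : ℝ) * θ ^ k * (1 - θ) ^ (n - k) * tay θ n (k:ℝ)
      = ∑ k ∈ Finset.range (n+1), ((n.choose k : ℝ) * θ ^ k * (1 - θ) ^ (n - k) * Real.log (1+(n:ℝ)*θ)
       + ((n.choose k : ℝ) * θ ^ k * (1 - θ) ^ (n - k) * (((k:ℝ) - (n:ℝ)*θ)^1)) * (1/(1+(n:ℝ)*θ))
       + ((n.choose k : ℝ) * θ ^ k * (1 - θ) ^ (n - k) * (((k:ℝ) - (n:ℝ)*θ)^2)) * (-(1/(2*(1+(n:ℝ)*θ)^2)))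
       + ((n.choose k : ℝ) * θ ^ k * (1 - θ) ^ (n - k) * (((k:ℝ) - (n:ℝ)*θ)^3)) * (1/(3*(1+(n:ℝ)*θ)^3))
       + ((n.choose k : ℝ) * θ ^ k * (1 - θ) ^ (n - k) * (((k:ℝ) - (n:ℝ)*θ)^4)) * (-(1/(4*(1+(n:ℝ)*θ)^4)))
       + ((n.choose k : ℝ) * θ ^ k * (1 - θ) ^ (n - k) * (((k:ℝ) - (n:ℝ)*θ)^5)) * (1/(5*(1+(n:ℝ)*θ)^5))) := by
        refine Finset.sum_congr rfl (fun k _ => ?_)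
        simp only [tay]
        ring
    _ = Real.log (1+(n:ℝ)*θ) - (1 * (n:ℝ)^1 * θ^1 + (-1) * (n:ℝ)^1 * θ^2)/(2*(1+(n:ℝ)*θ)^2) + (1 * (n:ℝ)^1 * θ^1 + (-3) * (n:ℝ)^1 * θ^2 + 2 * (n:ℝ)^1 * θ^3)/(3*(1+(n:ℝ)*θ)^3) - (1 * (n:ℝ)^1 * θ^1 + (-7) * (n:ℝ)^1 * θ^2 + 12 * (n:ℝ)^1 * θ^3 + (-6) * (n:ℝ)^1 * θ^4 + 3 * (n:ℝ)^2 * θ^2 + (-6) * (n:ℝ)^2 * θ^3 + 3 * (n:ℝ)^2 * θ^4)/(4*(1+(n:ℝ)*θ)^4) + (1 * (n:ℝ)^1 * θ^1 + (-15) * (n:ℝ)^1 * θ^2 + 50 * (n:ℝ)^1 * θ^3 + (-60) * (n:ℝ)^1 * θ^4 + 24 * (n:ℝ)^1 * θ^5 + 10 * (n:ℝ)^2 * θ^2 + (-40) * (n:ℝ)^2 * θ^3 + 50 * (n:ℝ)^2 * θ^4 + (-20) * (n:ℝ)^2 * θ^5)/(5*(1+(n:ℝ)*θ)^5) := by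
        simp only [Finset.sum_add_distrib, ← Finset.sum_mul]
        rw [h0, m1, m2, m3, m4, m5]
        ring

lemma atomB (y : ℝ) (n : ℕ) (hy0 : 0 ≤ y) (hy1 : y ≤ 1) (hn1 : (1:ℝ) ≤ (n:ℝ)) (i d j : ℕ) (hid : i ≤ d) :
    (n:ℝ)^i * y^j ≤ (n:ℝ)^d := by
  have h1 : y^j ≤ 1 := pow_le_one₀ hy0 hy1
  have h2 : (n:ℝ)^i ≤ (n:ℝ)^d := pow_le_pow_right₀ hn1 hid
  have h3 : (0:ℝ) ≤ (n:ℝ)^i := by positivity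
  nlinarith

lemma mom6Bound (θ : ℝ) (n : ℕ) (hθ0 : 0 < θ) (hθ1 : θ < 1) (hn1 : (1:ℝ) ≤ (n:ℝ)) :
    1 * (n:ℝ)^1 * θ^1 + (-31) * (n:ℝ)^1 * θ^2 + 180 * (n:ℝ)^1 * θ^3 + (-390) * (n:ℝ)^1 * θ^4 + 360 * (n:ℝ)^1 * θ^5 + (-120) * (n:ℝ)^1 * θ^6 + 25 * (n:ℝ)^2 * θ^2 + (-180) * (n:ℝ)^2 * θ^3 + 415 * (n:ℝ)^2 * θ^4 + (-390) * (n:ℝ)^2 * θ^5 + 130 * (n:ℝ)^2 * θ^6 + 15 * (n:ℝ)^3 * θ^3 + (-45) * (n:ℝ)^3 * θ^4 + 45 * (n:ℝ)^3 * θ^5 + (-15) * (n:ℝ)^3 * θ^6 ≤ 2342*(n:ℝ)^3 := by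
  have p1_1 : (0:ℝ) ≤ (n:ℝ)^1*θ^1 := by positivity
  have q1_1 := atomB θ n hθ0.le hθ1.le hn1 1 3 1 (by norm_num)
  have p1_2 : (0:ℝ) ≤ (n:ℝ)^1*θ^2 := by positivity
  have q1_2 := atomB θ n hθ0.le hθ1.le hn1 1 3 2 (by norm_num)
  have p1_3 : (0:ℝ) ≤ (n:ℝ)^1*θ^3 := by positivity
  have q1_3 := atomB θ n hθ0.le hθ1.le hn1 1 3 3 (by norm_num)
  have p1_4 : (0:ℝ) ≤ (n:ℝ)^1*θ^4 := by positivity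
  have q1_4 := atomB θ n hθ0.le hθ1.le hn1 1 3 4 (by norm_num)
  have p1_5 : (0:ℝ) ≤ (n:ℝ)^1*θ^5 := by positivity
  have q1_5 := atomB θ n hθ0.le hθ1.le hn1 1 3 5 (by norm_num)
  have p1_6 : (0:ℝ) ≤ (n:ℝ)^1*θ^6 := by positivity
  have q1_6 := atomB θ n hθ0.le hθ1.le hn1 1 3 6 (by norm_num)
  have p2_2 : (0:ℝ) ≤ (n:ℝ)^2*θ^2 := by positivity
  have q2_2 := atomB θ n hθ0.le hθ1.le hn1 2 3 2 (by norm_num)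
  have p2_3 : (0:ℝ) ≤ (n:ℝ)^2*θ^3 := by positivity
  have q2_3 := atomB θ n hθ0.le hθ1.le hn1 2 3 3 (by norm_num)
  have p2_4 : (0:ℝ) ≤ (n:ℝ)^2*θ^4 := by positivity
  have q2_4 := atomB θ n hθ0.le hθ1.le hn1 2 3 4 (by norm_num)
  have p2_5 : (0:ℝ) ≤ (n:ℝ)^2*θ^5 := by positivity
  have q2_5 := atomB θ n hθ0.le hθ1.le hn1 2 3 5 (by norm_num)
  have p2_6 : (0:ℝ) ≤ (n:ℝ)^2*θ^6 := by positivity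
  have q2_6 := atomB θ n hθ0.le hθ1.le hn1 2 3 6 (by norm_num)
  have p3_3 : (0:ℝ) ≤ (n:ℝ)^3*θ^3 := by positivity
  have q3_3 := atomB θ n hθ0.le hθ1.le hn1 3 3 3 (by norm_num)
  have p3_4 : (0:ℝ) ≤ (n:ℝ)^3*θ^4 := by positivity
  have q3_4 := atomB θ n hθ0.le hθ1.le hn1 3 3 4 (by norm_num)
  have p3_5 : (0:ℝ) ≤ (n:ℝ)^3*θ^5 := by positivity
  have q3_5 := atomB θ n hθ0.le hθ1.le hn1 3 3 5 (by norm_num)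
  have p3_6 : (0:ℝ) ≤ (n:ℝ)^3*θ^6 := by positivity
  have q3_6 := atomB θ n hθ0.le hθ1.le hn1 3 3 6 (by norm_num)
  have r0 : (1:ℝ)^3 ≤ (n:ℝ)^3 := pow_le_pow_left₀ zero_le_one hn1 3
  norm_num at r0
  linarith [p1_1, q1_1, p1_2, q1_2, p1_3, q1_3, p1_4, q1_4, p1_5, q1_5, p1_6, q1_6, p2_2, q2_2, p2_3, q2_3, p2_4, q2_4, p2_5, q2_5, p2_6, q2_6, p3_3, q3_3, p3_4, q3_4, p3_5, q3_5, p3_6, q3_6, r0]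

lemma mom8Bound (θ : ℝ) (n : ℕ) (hθ0 : 0 < θ) (hθ1 : θ < 1) (hn1 : (1:ℝ) ≤ (n:ℝ)) :
    1 * (n:ℝ)^1 * θ^1 + (-127) * (n:ℝ)^1 * θ^2 + 1932 * (n:ℝ)^1 * θ^3 + (-10206) * (n:ℝ)^1 * θ^4 + 25200 * (n:ℝ)^1 * θ^5 + (-31920) * (n:ℝ)^1 * θ^6 + 20160 * (n:ℝ)^1 * θ^7 + (-5040) * (n:ℝ)^1 * θ^8 + 119 * (n:ℝ)^2 * θ^2 + (-2394) * (n:ℝ)^2 * θ^3 + 13895 * (n:ℝ)^2 * θ^4 + (-35700) * (n:ℝ)^2 * θ^5 + 46004 * (n:ℝ)^2 * θ^6 + (-29232) * (n:ℝ)^2 * θ^7 + 7308 * (n:ℝ)^2 * θ^8 + 490 * (n:ℝ)^3 * θ^3 + (-3850) * (n:ℝ)^3 * θ^4 + 10990 * (n:ℝ)^3 * θ^5 + (-14770) * (n:ℝ)^3 * θ^6 + 9520 * (n:ℝ)^3 * θ^7 + (-2380) * (n:ℝ)^3 * θ^8 + 105 * (n:ℝ)^4 * θ^4 + (-420) * (n:ℝ)^4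 * θ^5 + 630 * (n:ℝ)^4 * θ^6 + (-420) * (n:ℝ)^4 * θ^7 + 105 * (n:ℝ)^4 * θ^8 ≤ 272918*(n:ℝ)^4 := by
  have p1_1 : (0:ℝ) ≤ (n:ℝ)^1*θ^1 := by positivity
  have q1_1 := atomB θ n hθ0.le hθ1.le hn1 1 4 1 (by norm_num)
  have p1_2 : (0:ℝ) ≤ (n:ℝ)^1*θ^2 := by positivity
  have q1_2 := atomB θ n hθ0.le hθ1.le hn1 1 4 2 (by norm_num)
  have p1_3 : (0:ℝ) ≤ (n:ℝ)^1*θ^3 := by positivity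
  have q1_3 := atomB θ n hθ0.le hθ1.le hn1 1 4 3 (by norm_num)
  have p1_4 : (0:ℝ) ≤ (n:ℝ)^1*θ^4 := by positivity
  have q1_4 := atomB θ n hθ0.le hθ1.le hn1 1 4 4 (by norm_num)
  have p1_5 : (0:ℝ) ≤ (n:ℝ)^1*θ^5 := by positivity
  have q1_5 := atomB θ n hθ0.le hθ1.le hn1 1 4 5 (by norm_num)
  have p1_6 : (0:ℝ) ≤ (n:ℝ)^1*θ^6 := by positivity
  have q1_6 := atomB θ n hθ0.le hθ1.le hn1 1 4 6 (by norm_num)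
  have p1_7 : (0:ℝ) ≤ (n:ℝ)^1*θ^7 := by positivity
  have q1_7 := atomB θ n hθ0.le hθ1.le hn1 1 4 7 (by norm_num)
  have p1_8 : (0:ℝ) ≤ (n:ℝ)^1*θ^8 := by positivity
  have q1_8 := atomB θ n hθ0.le hθ1.le hn1 1 4 8 (by norm_num)
  have p2_2 : (0:ℝ) ≤ (n:ℝ)^2*θ^2 := by positivity
  have q2_2 := atomB θ n hθ0.le hθ1.le hn1 2 4 2 (by norm_num)
  have p2_3 : (0:ℝ) ≤ (n:ℝ)^2*θ^3 := by positivity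
  have q2_3 := atomB θ n hθ0.le hθ1.le hn1 2 4 3 (by norm_num)
  have p2_4 : (0:ℝ) ≤ (n:ℝ)^2*θ^4 := by positivity
  have q2_4 := atomB θ n hθ0.le hθ1.le hn1 2 4 4 (by norm_num)
  have p2_5 : (0:ℝ) ≤ (n:ℝ)^2*θ^5 := by positivity
  have q2_5 := atomB θ n hθ0.le hθ1.le hn1 2 4 5 (by norm_num)
  have p2_6 : (0:ℝ) ≤ (n:ℝ)^2*θ^6 := by positivity
  have q2_6 := atomB θ n hθ0.le hθ1.le hn1 2 4 6 (by norm_num)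
  have p2_7 : (0:ℝ) ≤ (n:ℝ)^2*θ^7 := by positivity
  have q2_7 := atomB θ n hθ0.le hθ1.le hn1 2 4 7 (by norm_num)
  have p2_8 : (0:ℝ) ≤ (n:ℝ)^2*θ^8 := by positivity
  have q2_8 := atomB θ n hθ0.le hθ1.le hn1 2 4 8 (by norm_num)
  have p3_3 : (0:ℝ) ≤ (n:ℝ)^3*θ^3 := by positivity
  have q3_3 := atomB θ n hθ0.le hθ1.le hn1 3 4 3 (by norm_num)
  have p3_4 : (0:ℝ) ≤ (n:ℝ)^3*θ^4 := by positivity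
  have q3_4 := atomB θ n hθ0.le hθ1.le hn1 3 4 4 (by norm_num)
  have p3_5 : (0:ℝ) ≤ (n:ℝ)^3*θ^5 := by positivity
  have q3_5 := atomB θ n hθ0.le hθ1.le hn1 3 4 5 (by norm_num)
  have p3_6 : (0:ℝ) ≤ (n:ℝ)^3*θ^6 := by positivity
  have q3_6 := atomB θ n hθ0.le hθ1.le hn1 3 4 6 (by norm_num)
  have p3_7 : (0:ℝ) ≤ (n:ℝ)^3*θ^7 := by positivity
  have q3_7 := atomB θ n hθ0.le hθ1.le hn1 3 4 7 (by norm_num)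
  have p3_8 : (0:ℝ) ≤ (n:ℝ)^3*θ^8 := by positivity
  have q3_8 := atomB θ n hθ0.le hθ1.le hn1 3 4 8 (by norm_num)
  have p4_4 : (0:ℝ) ≤ (n:ℝ)^4*θ^4 := by positivity
  have q4_4 := atomB θ n hθ0.le hθ1.le hn1 4 4 4 (by norm_num)
  have p4_5 : (0:ℝ) ≤ (n:ℝ)^4*θ^5 := by positivity
  have q4_5 := atomB θ n hθ0.le hθ1.le hn1 4 4 5 (by norm_num)
  have p4_6 : (0:ℝ) ≤ (n:ℝ)^4*θ^6 := by positivity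
  have q4_6 := atomB θ n hθ0.le hθ1.le hn1 4 4 6 (by norm_num)
  have p4_7 : (0:ℝ) ≤ (n:ℝ)^4*θ^7 := by positivity
  have q4_7 := atomB θ n hθ0.le hθ1.le hn1 4 4 7 (by norm_num)
  have p4_8 : (0:ℝ) ≤ (n:ℝ)^4*θ^8 := by positivity
  have q4_8 := atomB θ n hθ0.le hθ1.le hn1 4 4 8 (by norm_num)
  have r0 : (1:ℝ)^4 ≤ (n:ℝ)^4 := pow_le_pow_left₀ zero_le_one hn1 4
  norm_num at r0
  linarith [p1_1, q1_1, p1_2, q1_2, p1_3, q1_3, p1_4, q1_4, p1_5, q1_5, p1_6, q1_6, p1_7, q1_7, p1_8, q1_8, p2_2, q2_2, p2_3, q2_3, p2_4, q2_4, p2_5, q2_5, p2_6, q2_6, p2_7, q2_7, p2_8, q2_8, p3_3, q3_3, p3_4, q3_4, p3_5, q3_5, p3_6, q3_6, p3_7, q3_7, p3_8, q3_8, p4_4, q4_4, p4_5, q4_5, p4_6, q4_6, p4_7, q4_7, p4_8, q4_8, r0]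

lemma numBound (θ : ℝ) (n : ℕ) (hθ0 : 0 < θ) (hθ1 : θ < 1) (hn1 : (1:ℝ) ≤ (n:ℝ)) :
    |20 + 65 * (n:ℝ)^1 * θ^1 + 30 * (n:ℝ)^1 * θ^2 + 5 * (n:ℝ)^1 * θ^3 + 55 * (n:ℝ)^2 * θ^2 + 120 * (n:ℝ)^2 * θ^3 + 25 * (n:ℝ)^2 * θ^4 + 150 * (n:ℝ)^3 * θ^4 + 50 * (n:ℝ)^3 * θ^5 + 37 * (n:ℝ)^4 * θ^4 + (-105) * (n:ℝ)^4 * θ^5 + 510 * (n:ℝ)^4 * θ^6 + (-630) * (n:ℝ)^4 * θ^7 + 288 * (n:ℝ)^4 * θ^8 + 155 * (n:ℝ)^5 * θ^5 + (-465) * (n:ℝ)^5 * θ^6 + 480 * (n:ℝ)^5 * θ^7 + (-150) * (n:ℝ)^5 * θ^8| ≤ 3340*(n:ℝ)^5 := by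
  have p1_1 : (0:ℝ) ≤ (n:ℝ)^1*θ^1 := by positivity
  have q1_1 := atomB θ n hθ0.le hθ1.le hn1 1 5 1 (by norm_num)
  have p1_2 : (0:ℝ) ≤ (n:ℝ)^1*θ^2 := by positivity
  have q1_2 := atomB θ n hθ0.le hθ1.le hn1 1 5 2 (by norm_num)
  have p1_3 : (0:ℝ) ≤ (n:ℝ)^1*θ^3 := by positivity
  have q1_3 := atomB θ n hθ0.le hθ1.le hn1 1 5 3 (by norm_num)
  have p2_2 : (0:ℝ) ≤ (n:ℝ)^2*θ^2 := by positivity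
  have q2_2 := atomB θ n hθ0.le hθ1.le hn1 2 5 2 (by norm_num)
  have p2_3 : (0:ℝ) ≤ (n:ℝ)^2*θ^3 := by positivity
  have q2_3 := atomB θ n hθ0.le hθ1.le hn1 2 5 3 (by norm_num)
  have p2_4 : (0:ℝ) ≤ (n:ℝ)^2*θ^4 := by positivity
  have q2_4 := atomB θ n hθ0.le hθ1.le hn1 2 5 4 (by norm_num)
  have p3_4 : (0:ℝ) ≤ (n:ℝ)^3*θ^4 := by positivity
  have q3_4 := atomB θ n hθ0.le hθ1.le hn1 3 5 4 (by norm_num)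
  have p3_5 : (0:ℝ) ≤ (n:ℝ)^3*θ^5 := by positivity
  have q3_5 := atomB θ n hθ0.le hθ1.le hn1 3 5 5 (by norm_num)
  have p4_4 : (0:ℝ) ≤ (n:ℝ)^4*θ^4 := by positivity
  have q4_4 := atomB θ n hθ0.le hθ1.le hn1 4 5 4 (by norm_num)
  have p4_5 : (0:ℝ) ≤ (n:ℝ)^4*θ^5 := by positivity
  have q4_5 := atomB θ n hθ0.le hθ1.le hn1 4 5 5 (by norm_num)
  have p4_6 : (0:ℝ) ≤ (n:ℝ)^4*θ^6 := by positivity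
  have q4_6 := atomB θ n hθ0.le hθ1.le hn1 4 5 6 (by norm_num)
  have p4_7 : (0:ℝ) ≤ (n:ℝ)^4*θ^7 := by positivity
  have q4_7 := atomB θ n hθ0.le hθ1.le hn1 4 5 7 (by norm_num)
  have p4_8 : (0:ℝ) ≤ (n:ℝ)^4*θ^8 := by positivity
  have q4_8 := atomB θ n hθ0.le hθ1.le hn1 4 5 8 (by norm_num)
  have p5_5 : (0:ℝ) ≤ (n:ℝ)^5*θ^5 := by positivity
  have q5_5 := atomB θ n hθ0.le hθ1.le hn1 5 5 5 (by norm_num)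
  have p5_6 : (0:ℝ) ≤ (n:ℝ)^5*θ^6 := by positivity
  have q5_6 := atomB θ n hθ0.le hθ1.le hn1 5 5 6 (by norm_num)
  have p5_7 : (0:ℝ) ≤ (n:ℝ)^5*θ^7 := by positivity
  have q5_7 := atomB θ n hθ0.le hθ1.le hn1 5 5 7 (by norm_num)
  have p5_8 : (0:ℝ) ≤ (n:ℝ)^5*θ^8 := by positivity
  have q5_8 := atomB θ n hθ0.le hθ1.le hn1 5 5 8 (by norm_num)
  have r0 : (1:ℝ)^5 ≤ (n:ℝ)^5 := pow_le_pow_left₀ zero_le_one hn1 5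
  norm_num at r0
  rw [abs_le]
  constructor <;> linarith [p1_1, q1_1, p1_2, q1_2, p1_3, q1_3, p2_2, q2_2, p2_3, q2_3, p2_4, q2_4, p3_4, q3_4, p3_5, q3_5, p4_4, q4_4, p4_5, q4_5, p4_6, q4_6, p4_7, q4_7, p4_8, q4_8, p5_5, q5_5, p5_6, q5_6, p5_7, q5_7, p5_8, q5_8, r0]

lemma deltaEq (θ : ℝ) (n : ℕ) (hθ0 : 0 < θ) (hn0 : (0:ℝ) < (n:ℝ)) :
    (- ((1 * (n:ℝ)^1 * θ^1 + (-1) * (n:ℝ)^1 * θ^2))/(2*(1+(n:ℝ)*θ)^2) + ((1 * (n:ℝ)^1 * θ^1 + (-3) * (n:ℝ)^1 * θ^2 + 2 * (n:ℝ)^1 * θ^3))/(3*(1+(n:ℝ)*θ)^3) - ((1 * (n:ℝ)^1 * θ^1 + (-7) * (n:ℝ)^1 * θ^2 + 12 * (n:ℝ)^1 * θ^3 + (-6) * (n:ℝ)^1 * θ^4 + 3 * (n:ℝ)^2 * θ^2 + (-6) * (n:ℝ)^2 * θ^3 + 3 * (n:ℝ)^2 * θ^4))/(4*(1+(n:ℝ)*θ)^4)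 + ((1 * (n:ℝ)^1 * θ^1 + (-15) * (n:ℝ)^1 * θ^2 + 50 * (n:ℝ)^1 * θ^3 + (-60) * (n:ℝ)^1 * θ^4 + 24 * (n:ℝ)^1 * θ^5 + 10 * (n:ℝ)^2 * θ^2 + (-40) * (n:ℝ)^2 * θ^3 + 50 * (n:ℝ)^2 * θ^4 + (-20) * (n:ℝ)^2 * θ^5))/(5*(1+(n:ℝ)*θ)^5))
      + (1/(θ*(n:ℝ)) - 1/(2*(θ*(n:ℝ))^2) + 1/(3*(θ*(n:ℝ))^3))
      - (1+θ)/(2*θ*(n:ℝ)) + (θ^2+6*θ-1)/(12*θ^2*(n:ℝ)^2)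
    = (20 + 65 * (n:ℝ)^1 * θ^1 + 30 * (n:ℝ)^1 * θ^2 + 5 * (n:ℝ)^1 * θ^3 + 55 * (n:ℝ)^2 * θ^2 + 120 * (n:ℝ)^2 * θ^3 + 25 * (n:ℝ)^2 * θ^4 + 150 * (n:ℝ)^3 * θ^4 + 50 * (n:ℝ)^3 * θ^5 + 37 * (n:ℝ)^4 * θ^4 + (-105) * (n:ℝ)^4 * θ^5 + 510 * (n:ℝ)^4 * θ^6 + (-630) * (n:ℝ)^4 * θ^7 + 288 * (n:ℝ)^4 * θ^8 + 155 * (n:ℝ)^5 * θ^5 + (-465) * (n:ℝ)^5 * θ^6 + 480 * (n:ℝ)^5 * θ^7 + (-150) * (n:ℝ)^5 * θ^8)/(60*θ^3*(n:ℝ)^3*(1+(n:ℝ)*θ)^5) := by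
  have hm : (0:ℝ) < 1+(n:ℝ)*θ := by positivity
  have hmne : (1+(n:ℝ)*θ) ≠ 0 := ne_of_gt hm
  field_simp
  ring




/-- asymptotics
`f(n,θ) = ln(θn) + (1+θ)/(2θn) − (θ²+6θ−1)/(12θ²n²) + O(1/n³)`. -/
theorem stmt_12 (θ : ℝ) (hθ : θ ∈ Set.Ioo (0 : ℝ) 1) :
    ∃ C : ℝ, 0 < C ∧ ∃ N : ℕ, ∀ n : ℕ, N ≤ n →
      |fBer n θ - Real.log (θ * (n : ℝ)) - (1 + θ) / (2 * θ * (n : ℝ)) +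
          (θ ^ 2 + 6 * θ - 1) / (12 * θ ^ 2 * (n : ℝ) ^ 2)| ≤ C / (n : ℝ) ^ 3 := by
  obtain ⟨hθ0, hθ1⟩ := hθ
  refine ⟨(3340/(60*θ^8) + 2/θ^4) + (2*2342/θ^6 + 256*272918*(2+5/θ^5)/θ^8), by positivity, max 8 (Nat.ceil (2/θ)), ?_⟩
  intro n hn
  have hn8 : 8 ≤ n := le_trans (le_max_left _ _) hn
  have hceil : Nat.ceil (2/θ) ≤ n := le_trans (le_max_right _ _) hn
  have hn1 : (1:ℝ) ≤ (n:ℝ) := by exact_mod_cast (by omega : 1 ≤ n)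
  have hn0 : (0:ℝ) < (n:ℝ) := by linarith
  have h2θn : 2 ≤ θ*(n:ℝ) := by
    have h1 : (2/θ : ℝ) ≤ ((Nat.ceil (2/θ) : ℕ):ℝ) := Nat.le_ceil _
    have h2 : ((Nat.ceil (2/θ) : ℕ):ℝ) ≤ (n:ℝ) := by exact_mod_cast hceil
    have h3 : 2/θ ≤ (n:ℝ) := le_trans h1 h2
    rw [div_le_iff₀ hθ0] at h3
    nlinarith
  have h1θ : (0:ℝ) ≤ 1 - θ := by linarith
  have hW0 : ∀ k : ℕ, 0 ≤ (n.choose k : ℝ) * θ ^ k * (1 - θ) ^ (n - k) := fun k => by positivity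
  have hθn1 : θ*(n:ℝ) ≤ 1 + (n:ℝ)*θ := by nlinarith
  -- remainder bound
  have hRbound : |fBer n θ - (∑ k ∈ Finset.range (n+1), (n.choose k : ℝ) * θ ^ k * (1 - θ) ^ (n - k) * tay θ n (k:ℝ))| ≤ (2*2342/θ^6 + 256*272918*(2+5/θ^5)/θ^8)/(n:ℝ)^3 := by
    have hfsplit : fBer n θ - (∑ k ∈ Finset.range (n+1), (n.choose k : ℝ) * θ ^ k * (1 - θ) ^ (n - k) * tay θ n (k:ℝ))
        = ∑ k ∈ Finset.range (n+1), ((n.choose k : ℝ) * θ ^ k * (1 - θ) ^ (n - k) * (Real.log (1 + (k:ℝ)) - tay θ n (k:ℝ))) := by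
      rw [fBer, ← Finset.sum_sub_distrib]
      exact Finset.sum_congr rfl (fun k _ => by ring)
    rw [hfsplit]
    have hstep1 : |∑ k ∈ Finset.range (n+1), ((n.choose k : ℝ) * θ ^ k * (1 - θ) ^ (n - k) * (Real.log (1 + (k:ℝ)) - tay θ n (k:ℝ)))|
        ≤ ∑ k ∈ Finset.range (n+1), (n.choose k : ℝ) * θ ^ k * (1 - θ) ^ (n - k) * (2*((k:ℝ)-(n:ℝ)*θ)^6/(1+(n:ℝ)*θ)^6 + ((2+5/θ^5)*(n:ℝ))*(256*((k:ℝ)-(n:ℝ)*θ)^8/(1+(n:ℝ)*θ)^8)) := by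
      refine le_trans (Finset.abs_sum_le_sum_abs _ _) (Finset.sum_le_sum (fun k hk => ?_))
      rw [abs_mul, abs_of_nonneg (hW0 k)]
      refine mul_le_mul_of_nonneg_left ?_ (hW0 k)
      have hkn : (k:ℝ) ≤ (n:ℝ) := by
        have := Finset.mem_range.1 hk
        exact_mod_cast (by omega : k ≤ n)
      have hpt := ptCore θ (n:ℝ) (k:ℝ) hθ0 hθ1 (by positivity) hkn hn1
      simp only [tay]
      exact hpt
    have hstep2 : ∑ k ∈ Finset.range (n+1), (n.choose k : ℝ) * θ ^ k * (1 - θ) ^ (n - k) * (2*((k:ℝ)-(n:ℝ)*θ)^6/(1+(n:ℝ)*θ)^6 + ((2+5/θ^5)*(n:ℝ))*(256*((k:ℝ)-(n:ℝ)*θ)^8/(1+(n:ℝ)*θ)^8))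
        = (1 * (n:ℝ)^1 * θ^1 + (-31) * (n:ℝ)^1 * θ^2 + 180 * (n:ℝ)^1 * θ^3 + (-390) * (n:ℝ)^1 * θ^4 + 360 * (n:ℝ)^1 * θ^5 + (-120) * (n:ℝ)^1 * θ^6 + 25 * (n:ℝ)^2 * θ^2 + (-180) * (n:ℝ)^2 * θ^3 + 415 * (n:ℝ)^2 * θ^4 + (-390) * (n:ℝ)^2 * θ^5 + 130 * (n:ℝ)^2 * θ^6 + 15 * (n:ℝ)^3 * θ^3 + (-45) * (n:ℝ)^3 * θ^4 + 45 * (n:ℝ)^3 * θ^5 + (-15) * (n:ℝ)^3 * θ^6) * (2/(1+(n:ℝ)*θ)^6) + (1 * (n:ℝ)^1 * θ^1 + (-127) * (n:ℝ)^1 * θ^2 + 1932 * (n:ℝ)^1 * θ^3 + (-10206) * (n:ℝ)^1 * θ^4 + 25200 * (n:ℝ)^1 * θ^5 + (-31920) * (n:ℝ)^1 * θ^6 + 20160 * (n:ℝ)^1 * θ^7 + (-5040) * (n:ℝ)^1 * θ^8 + 119 * (n:ℝ)^2 * θ^2 + (-2394) * (n:ℝ)^2 * θ^3 + 13895 * (n:ℝ)^2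 * θ^4 + (-35700) * (n:ℝ)^2 * θ^5 + 46004 * (n:ℝ)^2 * θ^6 + (-29232) * (n:ℝ)^2 * θ^7 + 7308 * (n:ℝ)^2 * θ^8 + 490 * (n:ℝ)^3 * θ^3 + (-3850) * (n:ℝ)^3 * θ^4 + 10990 * (n:ℝ)^3 * θ^5 + (-14770) * (n:ℝ)^3 * θ^6 + 9520 * (n:ℝ)^3 * θ^7 + (-2380) * (n:ℝ)^3 * θ^8 + 105 * (n:ℝ)^4 * θ^4 + (-420) * (n:ℝ)^4 * θ^5 + 630 * (n:ℝ)^4 * θ^6 + (-420) * (n:ℝ)^4 * θ^7 + 105 * (n:ℝ)^4 * θ^8) * (((2+5/θ^5)*(n:ℝ))*256/(1+(n:ℝ)*θ)^8) := by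
      calc ∑ k ∈ Finset.range (n+1), (n.choose k : ℝ) * θ ^ k * (1 - θ) ^ (n - k) * (2*((k:ℝ)-(n:ℝ)*θ)^6/(1+(n:ℝ)*θ)^6 + ((2+5/θ^5)*(n:ℝ))*(256*((k:ℝ)-(n:ℝ)*θ)^8/(1+(n:ℝ)*θ)^8))
          = ∑ k ∈ Finset.range (n+1), (((n.choose k : ℝ) * θ ^ k * (1 - θ) ^ (n - k) * (((k:ℝ) - (n:ℝ)*θ)^6)) * (2/(1+(n:ℝ)*θ)^6)
              + ((n.choose k : ℝ) * θ ^ k * (1 - θ) ^ (n - k) * (((k:ℝ) - (n:ℝ)*θ)^8)) * (((2+5/θ^5)*(n:ℝ))*256/(1+(n:ℝ)*θ)^8)) := by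
            refine Finset.sum_congr rfl (fun k _ => by ring)
        _ = _ := by
            simp only [Finset.sum_add_distrib, ← Finset.sum_mul]
            rw [mom6 θ n hn8, mom8 θ n hn8]
    have hp6 := mom6Bound θ n hθ0 hθ1 hn1
    have hp8 := mom8Bound θ n hθ0 hθ1 hn1
    have hp6nn : (0:ℝ) ≤ (1 * (n:ℝ)^1 * θ^1 + (-31) * (n:ℝ)^1 * θ^2 + 180 * (n:ℝ)^1 * θ^3 + (-390) * (n:ℝ)^1 * θ^4 + 360 * (n:ℝ)^1 * θ^5 + (-120) * (n:ℝ)^1 * θ^6 + 25 * (n:ℝ)^2 * θ^2 + (-180) * (n:ℝ)^2 * θ^3 + 415 * (n:ℝ)^2 * θ^4 + (-390) * (n:ℝ)^2 * θ^5 + 130 * (n:ℝ)^2 * θ^6 + 15 * (n:ℝ)^3 * θ^3 + (-45) * (n:ℝ)^3 * θ^4 + 45 * (n:ℝ)^3 * θ^5 + (-15) * (n:ℝ)^3 * θ^6) := by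
      rw [← mom6 θ n hn8]
      exact Finset.sum_nonneg (fun k _ => mul_nonneg (hW0 k) (by positivity))
    have hp8nn : (0:ℝ) ≤ (1 * (n:ℝ)^1 * θ^1 + (-127) * (n:ℝ)^1 * θ^2 + 1932 * (n:ℝ)^1 * θ^3 + (-10206) * (n:ℝ)^1 * θ^4 + 25200 * (n:ℝ)^1 * θ^5 + (-31920) * (n:ℝ)^1 * θ^6 + 20160 * (n:ℝ)^1 * θ^7 + (-5040) * (n:ℝ)^1 * θ^8 + 119 * (n:ℝ)^2 * θ^2 + (-2394) * (n:ℝ)^2 * θ^3 + 13895 * (n:ℝ)^2 * θ^4 + (-35700) * (n:ℝ)^2 * θ^5 + 46004 * (n:ℝ)^2 * θ^6 + (-29232) * (n:ℝ)^2 * θ^7 + 7308 * (n:ℝ)^2 * θ^8 + 490 * (n:ℝ)^3 * θ^3 + (-3850) * (n:ℝ)^3 * θ^4 + 10990 * (n:ℝ)^3 * θ^5 + (-14770) * (n:ℝ)^3 * θ^6 + 9520 * (n:ℝ)^3 * θ^7 + (-2380) * (n:ℝ)^3 * θ^8 + 105 * (n:ℝ)^4 * θ^4 + (-420) * (n:ℝ)^4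 * θ^5 + 630 * (n:ℝ)^4 * θ^6 + (-420) * (n:ℝ)^4 * θ^7 + 105 * (n:ℝ)^4 * θ^8) := by
      rw [← mom8 θ n hn8]
      exact Finset.sum_nonneg (fun k _ => mul_nonneg (hW0 k) (by positivity))
    have hmono6 : (θ*(n:ℝ))^6 ≤ (1+(n:ℝ)*θ)^6 := pow_le_pow_left₀ (by positivity) hθn1 6
    have hmono8 : (θ*(n:ℝ))^8 ≤ (1+(n:ℝ)*θ)^8 := pow_le_pow_left₀ (by positivity) hθn1 8
    have hdiv6 : 2/(1+(n:ℝ)*θ)^6 ≤ 2/(θ*(n:ℝ))^6 :=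
      div_le_div_of_nonneg_left (by norm_num) (by positivity) hmono6
    have hdiv8 : ((2+5/θ^5)*(n:ℝ))*256/(1+(n:ℝ)*θ)^8 ≤ ((2+5/θ^5)*(n:ℝ))*256/(θ*(n:ℝ))^8 :=
      div_le_div_of_nonneg_left (by positivity) (by positivity) hmono8
    have hmul6 : (1 * (n:ℝ)^1 * θ^1 + (-31) * (n:ℝ)^1 * θ^2 + 180 * (n:ℝ)^1 * θ^3 + (-390) * (n:ℝ)^1 * θ^4 + 360 * (n:ℝ)^1 * θ^5 + (-120) * (n:ℝ)^1 * θ^6 + 25 * (n:ℝ)^2 * θ^2 + (-180) * (n:ℝ)^2 * θ^3 + 415 * (n:ℝ)^2 * θ^4 + (-390) * (n:ℝ)^2 * θ^5 + 130 * (n:ℝ)^2 * θ^6 + 15 * (n:ℝ)^3 * θ^3 + (-45) * (n:ℝ)^3 * θ^4 + 45 * (n:ℝ)^3 * θ^5 + (-15) * (n:ℝ)^3 * θ^6) * (2/(1+(n:ℝ)*θ)^6) ≤ (2342*(n:ℝ)^3) * (2/(θ*(n:ℝ))^6) :=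
      mul_le_mul hp6 hdiv6 (by positivity) (by positivity)
    have hmul8 : (1 * (n:ℝ)^1 * θ^1 + (-127) * (n:ℝ)^1 * θ^2 + 1932 * (n:ℝ)^1 * θ^3 + (-10206) * (n:ℝ)^1 * θ^4 + 25200 * (n:ℝ)^1 * θ^5 + (-31920) * (n:ℝ)^1 * θ^6 + 20160 * (n:ℝ)^1 * θ^7 + (-5040) * (n:ℝ)^1 * θ^8 + 119 * (n:ℝ)^2 * θ^2 + (-2394) * (n:ℝ)^2 * θ^3 + 13895 * (n:ℝ)^2 * θ^4 + (-35700) * (n:ℝ)^2 * θ^5 + 46004 * (n:ℝ)^2 * θ^6 + (-29232) * (n:ℝ)^2 * θ^7 + 7308 * (n:ℝ)^2 * θ^8 + 490 * (n:ℝ)^3 * θ^3 + (-3850) * (n:ℝ)^3 * θ^4 + 10990 * (n:ℝ)^3 * θ^5 + (-14770) * (n:ℝ)^3 * θ^6 + 9520 * (n:ℝ)^3 * θ^7 + (-2380) * (n:ℝ)^3 * θ^8 + 105 * (n:ℝ)^4 * θ^4 + (-420) * (n:ℝ)^4 * θ^5 + 630 * (n:ℝ)^4 * θ^6 + (-420)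 * (n:ℝ)^4 * θ^7 + 105 * (n:ℝ)^4 * θ^8) * (((2+5/θ^5)*(n:ℝ))*256/(1+(n:ℝ)*θ)^8)
        ≤ (272918*(n:ℝ)^4) * (((2+5/θ^5)*(n:ℝ))*256/(θ*(n:ℝ))^8) :=
      mul_le_mul hp8 hdiv8 (by positivity) (by positivity)
    have heq6 : (2342*(n:ℝ)^3) * (2/(θ*(n:ℝ))^6) = (2*2342/θ^6)/(n:ℝ)^3 := by
      field_simp
    have heq8 : (272918*(n:ℝ)^4) * (((2+5/θ^5)*(n:ℝ))*256/(θ*(n:ℝ))^8)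
        = (256*272918*(2+5/θ^5)/θ^8)/(n:ℝ)^3 := by
      field_simp
    have hfin : (2*2342/θ^6 + 256*272918*(2+5/θ^5)/θ^8)/(n:ℝ)^3 = (2*2342/θ^6)/(n:ℝ)^3 + (256*272918*(2+5/θ^5)/θ^8)/(n:ℝ)^3 := by
      ring
    rw [hstep2] at hstep1
    rw [hfin]
    linarith [hstep1, hmul6, hmul8, heq6.le, heq8.le, heq6.ge, heq8.ge]
  -- deterministic bound
  have hdet : |(∑ k ∈ Finset.range (n+1), (n.choose k : ℝ) * θ ^ k * (1 - θ) ^ (n - k) * tay θ n (k:ℝ)) - Real.log (θ * (n:ℝ)) - (1 + θ) / (2 * θ * (n:ℝ))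
        + (θ ^ 2 + 6 * θ - 1) / (12 * θ ^ 2 * (n : ℝ) ^ 2)| ≤ (3340/(60*θ^8) + 2/θ^4)/(n:ℝ)^3 := by
    rw [expT θ n hn8]
    have hlogsplit : Real.log (1+(n:ℝ)*θ) = Real.log (θ*(n:ℝ)) + Real.log (1 + 1/(θ*(n:ℝ))) := by
      rw [← Real.log_mul (by positivity) (by positivity)]
      congr 1
      field_simp
      ring
    have hiden : (Real.log (1+(n:ℝ)*θ) - (1 * (n:ℝ)^1 * θ^1 + (-1) * (n:ℝ)^1 * θ^2)/(2*(1+(n:ℝ)*θ)^2) + (1 * (n:ℝ)^1 * θ^1 + (-3) * (n:ℝ)^1 * θ^2 + 2 * (n:ℝ)^1 * θ^3)/(3*(1+(n:ℝ)*θ)^3) - (1 * (n:ℝ)^1 * θ^1 + (-7) * (n:ℝ)^1 * θ^2 + 12 * (n:ℝ)^1 * θ^3 + (-6) * (n:ℝ)^1 * θ^4 + 3 * (n:ℝ)^2 * θ^2 + (-6) * (n:ℝ)^2 * θ^3 + 3 * (n:ℝ)^2 * θ^4)/(4*(1+(n:ℝ)*θ)^4) + (1 * (n:ℝ)^1 *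 θ^1 + (-15) * (n:ℝ)^1 * θ^2 + 50 * (n:ℝ)^1 * θ^3 + (-60) * (n:ℝ)^1 * θ^4 + 24 * (n:ℝ)^1 * θ^5 + 10 * (n:ℝ)^2 * θ^2 + (-40) * (n:ℝ)^2 * θ^3 + 50 * (n:ℝ)^2 * θ^4 + (-20) * (n:ℝ)^2 * θ^5)/(5*(1+(n:ℝ)*θ)^5)) - Real.log (θ * (n:ℝ)) - (1 + θ) / (2 * θ * (n:ℝ))
          + (θ ^ 2 + 6 * θ - 1) / (12 * θ ^ 2 * (n : ℝ) ^ 2)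
        = (Real.log (1 + 1/(θ*(n:ℝ))) - (1/(θ*(n:ℝ)) - 1/(2*(θ*(n:ℝ))^2) + 1/(3*(θ*(n:ℝ))^3)))
          + (20 + 65 * (n:ℝ)^1 * θ^1 + 30 * (n:ℝ)^1 * θ^2 + 5 * (n:ℝ)^1 * θ^3 + 55 * (n:ℝ)^2 * θ^2 + 120 * (n:ℝ)^2 * θ^3 + 25 * (n:ℝ)^2 * θ^4 + 150 * (n:ℝ)^3 * θ^4 + 50 * (n:ℝ)^3 * θ^5 + 37 * (n:ℝ)^4 * θ^4 + (-105) * (n:ℝ)^4 * θ^5 + 510 * (n:ℝ)^4 * θ^6 + (-630) * (n:ℝ)^4 * θ^7 + 288 * (n:ℝ)^4 * θ^8 + 155 * (n:ℝ)^5 * θ^5 + (-465) * (n:ℝ)^5 * θ^6 + 480 * (n:ℝ)^5 * θ^7 + (-150) * (n:ℝ)^5 * θ^8)/(60*θ^3*(n:ℝ)^3*(1+(n:ℝ)*θ)^5) := by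
      rw [hlogsplit, ← deltaEq θ n hθ0 hn0]
      ring
    rw [hiden]
    have hu0 : (0:ℝ) < 1/(θ*(n:ℝ)) := by positivity
    have hu2 : 1/(θ*(n:ℝ)) ≤ 1/2 := by
      rw [div_le_div_iff₀ (by positivity) (by norm_num)]
      linarith
    have hmain := Real.abs_log_sub_add_sum_range_le (x := -(1/(θ*(n:ℝ)))) (by rw [abs_neg, abs_of_pos hu0]; linarith) 3
    have hsum3 : (∑ i ∈ Finset.range 3, (-(1/(θ*(n:ℝ))))^(i+1)/(i+1))
        = -((1/(θ*(n:ℝ))) - 1/(2*(θ*(n:ℝ))^2) + 1/(3*(θ*(n:ℝ))^3)) := by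
      simp [Finset.sum_range_succ]
      norm_num
      ring
    rw [hsum3] at hmain
    have he : (-((1/(θ*(n:ℝ))) - 1/(2*(θ*(n:ℝ))^2) + 1/(3*(θ*(n:ℝ))^3))) + Real.log (1 - -(1/(θ*(n:ℝ))))
        = Real.log (1 + 1/(θ*(n:ℝ))) - ((1/(θ*(n:ℝ))) - 1/(2*(θ*(n:ℝ))^2) + 1/(3*(θ*(n:ℝ))^3)) := by
      rw [sub_neg_eq_add]
      ring
    rw [he] at hmain
    rw [abs_neg, abs_of_pos hu0] at hmain
    have hden : (1:ℝ)/2 ≤ 1 - 1/(θ*(n:ℝ)) := by linarith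
    have hu4 : (1/(θ*(n:ℝ)))^4/(1 - 1/(θ*(n:ℝ))) ≤ 2*(1/(θ*(n:ℝ)))^4 := by
      rw [div_le_iff₀ (by linarith : (0:ℝ) < 1 - 1/(θ*(n:ℝ)))]
      nlinarith [pow_nonneg hu0.le 4]
    have hufin : 2*(1/(θ*(n:ℝ)))^4 ≤ (2/θ^4)/(n:ℝ)^3 := by
      have h1 : 2*(1/(θ*(n:ℝ)))^4 = 2/(θ^4*(n:ℝ)^4) := by
        rw [div_pow, one_pow, mul_pow]
        ring
      have h4 : (n:ℝ)^3 ≤ (n:ℝ)^4 := pow_le_pow_right₀ hn1 (by norm_num)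
      have h5 : θ^4*(n:ℝ)^3 ≤ θ^4*(n:ℝ)^4 := mul_le_mul_of_nonneg_left h4 (by positivity)
      have h2 : 2/(θ^4*(n:ℝ)^4) ≤ 2/(θ^4*(n:ℝ)^3) :=
        div_le_div_of_nonneg_left (by norm_num) (by positivity) h5
      have h3 : (2/θ^4)/(n:ℝ)^3 = 2/(θ^4*(n:ℝ)^3) := div_div 2 (θ^4) ((n:ℝ)^3)
      rw [h1, h3]
      exact h2
    have hnum := numBound θ n hθ0 hθ1 hn1
    have habs2 : |(20 + 65 * (n:ℝ)^1 * θ^1 + 30 * (n:ℝ)^1 * θ^2 + 5 * (n:ℝ)^1 * θ^3 + 55 * (n:ℝ)^2 * θ^2 + 120 * (n:ℝ)^2 * θ^3 + 25 * (n:ℝ)^2 * θ^4 + 150 * (n:ℝ)^3 * θ^4 + 50 * (n:ℝ)^3 * θ^5 + 37 * (n:ℝ)^4 * θ^4 + (-105) * (n:ℝ)^4 * θ^5 + 510 * (n:ℝ)^4 * θ^6 + (-630) * (n:ℝ)^4 * θ^7 + 288 * (n:ℝ)^4 * θ^8 + 155 * (n:ℝ)^5 * θ^5 + (-465) * (n:ℝ)^5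 * θ^6 + 480 * (n:ℝ)^5 * θ^7 + (-150) * (n:ℝ)^5 * θ^8)/(60*θ^3*(n:ℝ)^3*(1+(n:ℝ)*θ)^5)| ≤ (3340/(60*θ^8))/(n:ℝ)^3 := by
      rw [abs_div, abs_of_pos (by positivity : (0:ℝ) < 60*θ^3*(n:ℝ)^3*(1+(n:ℝ)*θ)^5)]
      have h1 : (θ*(n:ℝ))^5 ≤ (1+(n:ℝ)*θ)^5 := pow_le_pow_left₀ (by positivity) hθn1 5
      have hden2 : 60*θ^8*(n:ℝ)^8 ≤ 60*θ^3*(n:ℝ)^3*(1+(n:ℝ)*θ)^5 := by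
        have h2 := mul_le_mul_of_nonneg_left h1 (by positivity : (0:ℝ) ≤ 60*θ^3*(n:ℝ)^3)
        nlinarith [h2]
      calc |(20 + 65 * (n:ℝ)^1 * θ^1 + 30 * (n:ℝ)^1 * θ^2 + 5 * (n:ℝ)^1 * θ^3 + 55 * (n:ℝ)^2 * θ^2 + 120 * (n:ℝ)^2 * θ^3 + 25 * (n:ℝ)^2 * θ^4 + 150 * (n:ℝ)^3 * θ^4 + 50 * (n:ℝ)^3 * θ^5 + 37 * (n:ℝ)^4 * θ^4 + (-105) * (n:ℝ)^4 * θ^5 + 510 * (n:ℝ)^4 * θ^6 + (-630) * (n:ℝ)^4 * θ^7 + 288 * (n:ℝ)^4 * θ^8 + 155 * (n:ℝ)^5 * θ^5 + (-465) * (n:ℝ)^5 * θ^6 + 480 * (n:ℝ)^5 * θ^7 + (-150) * (n:ℝ)^5 * θ^8)|/(60*θ^3*(n:ℝ)^3*(1+(n:ℝ)*θ)^5)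
          ≤ (3340*(n:ℝ)^5)/(60*θ^8*(n:ℝ)^8) :=
            div_le_div₀ (by positivity) hnum (by positivity) hden2
        _ = (3340/(60*θ^8))/(n:ℝ)^3 := by
            field_simp
    calc |(Real.log (1 + 1/(θ*(n:ℝ))) - (1/(θ*(n:ℝ)) - 1/(2*(θ*(n:ℝ))^2) + 1/(3*(θ*(n:ℝ))^3)))
          + (20 + 65 * (n:ℝ)^1 * θ^1 + 30 * (n:ℝ)^1 * θ^2 + 5 * (n:ℝ)^1 * θ^3 + 55 * (n:ℝ)^2 * θ^2 + 120 * (n:ℝ)^2 * θ^3 + 25 * (n:ℝ)^2 * θ^4 + 150 * (n:ℝ)^3 * θ^4 + 50 * (n:ℝ)^3 * θ^5 + 37 * (n:ℝ)^4 * θ^4 + (-105) * (n:ℝ)^4 * θ^5 + 510 * (n:ℝ)^4 * θ^6 + (-630) * (n:ℝ)^4 * θ^7 + 288 * (n:ℝ)^4 * θ^8 + 155 * (n:ℝ)^5 * θ^5 + (-465) * (n:ℝ)^5 * θ^6 + 480 * (n:ℝ)^5 * θ^7 + (-150) * (n:ℝ)^5 * θ^8)/(60*θ^3*(n:ℝ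)^3*(1+(n:ℝ)*θ)^5)|
        ≤ |Real.log (1 + 1/(θ*(n:ℝ))) - (1/(θ*(n:ℝ)) - 1/(2*(θ*(n:ℝ))^2) + 1/(3*(θ*(n:ℝ))^3))|
          + |(20 + 65 * (n:ℝ)^1 * θ^1 + 30 * (n:ℝ)^1 * θ^2 + 5 * (n:ℝ)^1 * θ^3 + 55 * (n:ℝ)^2 * θ^2 + 120 * (n:ℝ)^2 * θ^3 + 25 * (n:ℝ)^2 * θ^4 + 150 * (n:ℝ)^3 * θ^4 + 50 * (n:ℝ)^3 * θ^5 + 37 * (n:ℝ)^4 * θ^4 + (-105) * (n:ℝ)^4 * θ^5 + 510 * (n:ℝ)^4 * θ^6 + (-630) * (n:ℝ)^4 * θ^7 + 288 * (n:ℝ)^4 * θ^8 + 155 * (n:ℝ)^5 * θ^5 + (-465) * (n:ℝ)^5 * θ^6 + 480 * (n:ℝ)^5 * θ^7 + (-150) * (n:ℝ)^5 * θ^8)/(60*θ^3*(n:ℝ)^3*(1+(n:ℝ)*θ)^5)| := abs_add_le _ _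
      _ ≤ (3340/(60*θ^8) + 2/θ^4)/(n:ℝ)^3 := by
          have hsplit2 : (3340/(60*θ^8) + 2/θ^4)/(n:ℝ)^3 = (3340/(60*θ^8))/(n:ℝ)^3 + (2/θ^4)/(n:ℝ)^3 := by ring
          rw [hsplit2]
          linarith [hmain, hu4, hufin, habs2]
  have hdecomp : fBer n θ - Real.log (θ * (n : ℝ)) - (1 + θ) / (2 * θ * (n : ℝ)) +
          (θ ^ 2 + 6 * θ - 1) / (12 * θ ^ 2 * (n : ℝ) ^ 2)
      = (fBer n θ - (∑ k ∈ Finset.range (n+1), (n.choose k : ℝ) * θ ^ k * (1 - θ) ^ (n - k) * tay θ n (k:ℝ)))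
        + ((∑ k ∈ Finset.range (n+1), (n.choose k : ℝ) * θ ^ k * (1 - θ) ^ (n - k) * tay θ n (k:ℝ)) - Real.log (θ * (n:ℝ)) - (1 + θ) / (2 * θ * (n:ℝ))
          + (θ ^ 2 + 6 * θ - 1) / (12 * θ ^ 2 * (n : ℝ) ^ 2)) := by ring
  rw [hdecomp]
  have htot : ((3340/(60*θ^8) + 2/θ^4) + (2*2342/θ^6 + 256*272918*(2+5/θ^5)/θ^8))/(n:ℝ)^3 = (3340/(60*θ^8) + 2/θ^4)/(n:ℝ)^3 + (2*2342/θ^6 + 256*272918*(2+5/θ^5)/θ^8)/(n:ℝ)^3 := by ring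
  rw [htot]
  exact le_trans (abs_add_le _ _) (by linarith [hRbound, hdet])

end
end
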